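/- arXiv:1702.05141 — 7 statements merged into one kernel-verified Lean document; each statement's English description precedes it below -/
import Mathlib

section
/- Let X be a finite set with |X| ≥ 2 and let δ be a dissimilarity map on X. Then there exists a nonempty finite set V of ultrametrics on X such that the set of all ultrametrics that are l∞-nearest to δ is exactly the tropical convex hull tconv(V); in particular, the set of ultrametrics l∞-nearest to δ is a nonempty tropical polytope. -/
/-- A dissimilarity map on `X`: symmetric with zero diagonal
(equivalently, a real number attached to each 2-element subset of `X`). -/
def IsDissim {X : Type*} (d : X → X → ℝ) : Prop :=
  (∀ x, d x x = 0) ∧ (∀ x y, d x y = d y x)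

/-- An ultrametric: a dissimilarity map such that for all pairwise distinct `x,y,z`,
the maximum of the three pairwise values is attained at least twice. -/
def IsUltra {X : Type*} (d : X → X → ℝ) : Prop :=
  IsDissim d ∧ ∀ x y z : X, x ≠ y → x ≠ z → y ≠ z →
    ((d x y = d x z ∧ d y z ≤ d x y) ∨ (d x y = d y z ∧ d x z ≤ d x y) ∨
      (d x z = d y z ∧ d x y ≤ d x z))

/-- The `l∞`-distance between two dissimilarity maps: the maximum of
`|d₁{x,y} - d₂{x,y}|` over 2-element subsets `{x,y}`. -/
noncomputable def dinf {X : Type*} (d₁ d₂ : X → X → ℝ) : ℝ :=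
  sSup {r | ∃ x y : X, x ≠ y ∧ r = |d₁ x y - d₂ x y|}

/-- `u` is an ultrametric that is `l∞`-nearest to `δ`. -/
def NearestUltra {X : Type*} (δ u : X → X → ℝ) : Prop :=
  IsUltra u ∧ ∀ u', IsUltra u' → dinf δ u ≤ dinf δ u'

/-- The tropical convex hull of a nonempty finite set of points. -/
def tconv {X : Type*} (V : Finset (X → X → ℝ)) (hV : V.Nonempty) : Set (X → X → ℝ) :=
  {d | ∃ lam : (X → X → ℝ) → ℝ, V.sup' hV lam = 0 ∧
    ∀ x y : X, d x y = V.sup' hV (fun v => lam v + v x y)}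

lemma isUltra_iff' {X : Type*} (d : X → X → ℝ) :
    IsUltra d ↔ IsDissim d ∧ ∀ x y z : X, x ≠ y → x ≠ z → y ≠ z →
      d x y ≤ max (d x z) (d y z) := by
  constructor
  · rintro ⟨hd, h⟩
    refine ⟨hd, fun x y z hxy hxz hyz => ?_⟩
    rcases h x y z hxy hxz hyz with ⟨h1, _⟩ | ⟨h1, _⟩ | ⟨_, h2⟩
    · rw [h1]; exact le_max_left _ _
    · rw [h1]; exact le_max_right _ _
    · exact le_trans h2 (le_max_left _ _)
  · rintro ⟨hd, h⟩
    refine ⟨hd, fun x y z hxy hxz hyz => ?_⟩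
    have A := le_max_iff.mp (h x y z hxy hxz hyz)
    have B := le_max_iff.mp (h x z y hxz hxy hyz.symm)
    have C := le_max_iff.mp (h y z x hyz hxy.symm hxz.symm)
    rw [hd.2 z y] at B
    rw [hd.2 y x, hd.2 z x] at C
    rcases A with h1 | h1 <;> rcases B with h2 | h2 <;> rcases C with h3 | h3 <;>
      first
        | (exact Or.inl ⟨by linarith, by linarith⟩)
        | (exact Or.inr (Or.inl ⟨by linarith, by linarith⟩))
        | (exact Or.inr (Or.inr ⟨by linarith, by linarith⟩))

lemma isUltra_shift {X : Type*} [DecidableEq X] {u : X → X → ℝ} (c : ℝ) (hu : IsUltra u) :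
    IsUltra (fun x y => if x = y then 0 else u x y + c) := by
  rw [isUltra_iff'] at hu ⊢
  refine ⟨⟨fun x => by simp, fun x y => ?_⟩, fun x y z hxy hxz hyz => ?_⟩
  · by_cases h : x = y
    · simp [h]
    · simp only [if_neg h, if_neg (Ne.symm h), hu.1.2 x y]
  · simp only [if_neg hxy, if_neg hxz, if_neg hyz]
    have := hu.2 x y z hxy hxz hyz
    rcases le_max_iff.mp this with h | h
    · exact le_max_of_le_left (by linarith)
    · exact le_max_of_le_right (by linarith)

lemma dinf_le {X : Type*} {d₁ d₂ : X → X → ℝ} {r : ℝ} (hne : ∃ x y : X, x ≠ y)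
    (h : ∀ x y, x ≠ y → |d₁ x y - d₂ x y| ≤ r) : dinf d₁ d₂ ≤ r := by
  obtain ⟨x, y, hxy⟩ := hne
  refine csSup_le ⟨_, x, y, hxy, rfl⟩ ?_
  rintro s ⟨a, b, hab, rfl⟩
  exact h a b hab

lemma le_dinf {X : Type*} [Fintype X] {d₁ d₂ : X → X → ℝ} {x y : X} (hxy : x ≠ y) :
    |d₁ x y - d₂ x y| ≤ dinf d₁ d₂ := by
  refine le_csSup ?_ ⟨x, y, hxy, rfl⟩
  refine BddAbove.mono ?_ (Set.finite_range
    (fun p : X × X => |d₁ p.1 p.2 - d₂ p.1 p.2|)).bddAbove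
  rintro s ⟨a, b, hab, rfl⟩
  exact ⟨(a, b), rfl⟩

/-- The subdominant ultrametric: pointwise supremum of all ultrametrics below `δ`. -/
noncomputable def subd {X : Type*} [DecidableEq X] (δ : X → X → ℝ) : X → X → ℝ :=
  fun x y => if x = y then 0
    else sSup {r | ∃ u : X → X → ℝ, IsUltra u ∧ (∀ a b, a ≠ b → u a b ≤ δ a b) ∧ r = u x y}

lemma exists_ultra_le {X : Type*} [DecidableEq X] [Fintype X] (hne : ∃ x y : X, x ≠ y) (δ : X → X → ℝ) :
    ∃ u : X → X → ℝ, IsUltra u ∧ ∀ a b : X, a ≠ b → u a b ≤ δ a b := by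
  classical
  obtain ⟨x₀, y₀, hxy₀⟩ := hne
  have hP : (Finset.univ.offDiag : Finset (X × X)).Nonempty :=
    ⟨(x₀, y₀), Finset.mem_offDiag.2 ⟨Finset.mem_univ _, Finset.mem_univ _, hxy₀⟩⟩
  set b := (Finset.univ.offDiag : Finset (X × X)).inf' hP (fun p => δ p.1 p.2) with hb
  refine ⟨fun x y => if x = y then 0 else b, ?_, fun a c hac => ?_⟩
  · rw [isUltra_iff']
    refine ⟨⟨fun x => by simp, fun x y => ?_⟩, fun x y z hxy hxz hyz => ?_⟩
    · by_cases h : x = y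
      · simp [h]
      · simp [if_neg h, if_neg (Ne.symm h)]
    · simp [if_neg hxy, if_neg hxz, if_neg hyz]
  · simp only [if_neg hac]
    exact Finset.inf'_le (fun p : X × X => δ p.1 p.2) (b := (a, c)) (Finset.mem_offDiag.2 ⟨Finset.mem_univ _, Finset.mem_univ _, hac⟩)

lemma subd_bddAbove {X : Type*} [DecidableEq X] (δ : X → X → ℝ) {x y : X} (hxy : x ≠ y) :
    BddAbove {r | ∃ u : X → X → ℝ, IsUltra u ∧ (∀ a b, a ≠ b → u a b ≤ δ a b) ∧ r = u x y} := by
  refine ⟨δ x y, ?_⟩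
  rintro r ⟨u, _, hle, rfl⟩
  exact hle x y hxy

lemma subd_le {X : Type*} [DecidableEq X] (δ : X → X → ℝ) [Fintype X] (hne : ∃ x y : X, x ≠ y)
    {x y : X} (hxy : x ≠ y) : subd δ x y ≤ δ x y := by
  obtain ⟨u₀, hu₀, hu₀le⟩ := exists_ultra_le hne δ
  rw [subd, if_neg hxy]
  refine csSup_le ⟨_, u₀, hu₀, hu₀le, rfl⟩ ?_
  rintro r ⟨u, _, hle, rfl⟩
  exact hle x y hxy

lemma le_subd {X : Type*} [DecidableEq X] {δ u : X → X → ℝ} (hu : IsUltra u)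
    (hle : ∀ a b, a ≠ b → u a b ≤ δ a b) {x y : X} (hxy : x ≠ y) :
    u x y ≤ subd δ x y := by
  rw [subd, if_neg hxy]
  exact le_csSup (subd_bddAbove δ hxy) ⟨u, hu, hle, rfl⟩

lemma isUltra_subd {X : Type*} [DecidableEq X] [Fintype X] (hne : ∃ x y : X, x ≠ y) (δ : X → X → ℝ) :
    IsUltra (subd δ) := by
  obtain ⟨u₀, hu₀, hu₀le⟩ := exists_ultra_le hne δ
  rw [isUltra_iff']
  refine ⟨⟨fun x => by simp [subd], fun x y => ?_⟩, fun x y z hxy hxz hyz => ?_⟩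
  · by_cases h : x = y
    · simp [subd, h]
    · rw [subd, subd, if_neg h, if_neg (Ne.symm h)]
      congr 1
      ext r
      constructor
      · rintro ⟨u, hu, hle, rfl⟩; exact ⟨u, hu, hle, (hu.1.2 x y)⟩
      · rintro ⟨u, hu, hle, rfl⟩; exact ⟨u, hu, hle, hu.1.2 y x⟩
  · conv_lhs => rw [subd, if_neg hxy]
    refine csSup_le ⟨_, u₀, hu₀, hu₀le, rfl⟩ ?_
    rintro r ⟨u, hu, hle, rfl⟩
    have h1 := ((isUltra_iff' u).1 hu).2 x y z hxy hxz hyz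
    have h2 : u x z ≤ subd δ x z := le_subd hu hle hxz
    have h3 : u y z ≤ subd δ y z := le_subd hu hle hyz
    exact le_trans h1 (max_le_max h2 h3)
/-- The set of ultrametrics `l∞`-nearest to a dissimilarity map `δ` is the tropical
convex hull of a nonempty finite set of ultrametrics; in particular it is a nonempty
tropical polytope. -/
theorem stmt0 {X : Type*} [Fintype X] (hcard : 2 ≤ Fintype.card X)
    (δ : X → X → ℝ) (hδ : IsDissim δ) :
    ∃ (V : Finset (X → X → ℝ)) (hV : V.Nonempty),
      (∀ v ∈ V, IsUltra v) ∧
      {u | NearestUltra δ u} = tconv V hV ∧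
      {u | NearestUltra δ u}.Nonempty := by
  classical
  have hne : ∃ x y : X, x ≠ y := Fintype.exists_pair_of_one_lt_card (by omega)
  set P : Finset (X × X) := Finset.univ.offDiag with hPdef
  have hmemP : ∀ {a b : X}, a ≠ b → (a, b) ∈ P := fun h =>
    Finset.mem_offDiag.2 ⟨Finset.mem_univ _, Finset.mem_univ _, h⟩
  have hP : P.Nonempty := by
    obtain ⟨x, y, h⟩ := hne; exact ⟨(x, y), hmemP h⟩
  have hPne : ∀ {q : X × X}, q ∈ P → q.1 ≠ q.2 := fun hq => (Finset.mem_offDiag.1 hq).2.2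
  set G := subd δ with hG
  set t : ℝ := (P.sup' hP fun p => δ p.1 p.2 - G p.1 p.2) / 2 with ht
  have hGle : ∀ a b : X, a ≠ b → G a b ≤ δ a b := fun a b hab => subd_le δ hne hab
  have h2t : ∀ a b : X, a ≠ b → δ a b - G a b ≤ 2 * t := by
    intro a b hab
    have h := Finset.le_sup' (fun p : X × X => δ p.1 p.2 - G p.1 p.2) (hmemP hab)
    rw [ht]; linarith
  have ht0 : 0 ≤ t := by
    obtain ⟨x, y, hxy⟩ := hne
    have h := Finset.le_sup' (fun p : X × X => δ p.1 p.2 - G p.1 p.2) (hmemP hxy)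
    have h2 := hGle x y hxy
    rw [ht]; linarith
  obtain ⟨pstar, hpstarP, hpstar⟩ := P.exists_mem_eq_sup' hP (fun p => δ p.1 p.2 - G p.1 p.2)
  have habstar : pstar.1 ≠ pstar.2 := hPne hpstarP
  have hstar : δ pstar.1 pstar.2 - G pstar.1 pstar.2 = 2 * t := by
    rw [ht, ← hpstar]; ring
  set M : X → X → ℝ := fun x y => if x = y then 0 else G x y + t with hM
  have hMval : ∀ a b : X, a ≠ b → M a b = G a b + t := fun a b hab => by
    rw [hM]; exact if_neg hab
  have hMultra : IsUltra M := isUltra_shift t (isUltra_subd hne δ)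
  have hdinfM : dinf δ M ≤ t := by
    refine dinf_le hne fun a b hab => ?_
    rw [hMval a b hab, abs_le]
    constructor
    · linarith [hGle a b hab, h2t a b hab]
    · linarith [hGle a b hab, h2t a b hab]
  have hupper : ∀ u : X → X → ℝ, IsUltra u → (∀ a b : X, a ≠ b → u a b ≤ δ a b + t) →
      ∀ a b : X, a ≠ b → u a b ≤ M a b := by
    intro u hu hle a b hab
    have h1 : IsUltra (fun x y => if x = y then 0 else u x y + (-t)) := isUltra_shift (-t) hu
    have h2 : ∀ c d : X, c ≠ d → (if c = d then 0 else u c d + (-t)) ≤ δ c d := by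
      intro c d hcd; rw [if_neg hcd]; linarith [hle c d hcd]
    have h3 := le_subd h1 h2 hab
    rw [if_neg hab] at h3
    rw [hMval a b hab]
    linarith
  have hlower : ∀ u', IsUltra u' → t ≤ dinf δ u' := by
    intro u' hu'
    set e := dinf δ u' with he
    have hle : ∀ a b : X, a ≠ b → u' a b ≤ δ a b + e := by
      intro a b hab
      have h := abs_le.1 (le_dinf (d₁ := δ) (d₂ := u') hab)
      linarith [h.1]
    have hmax : ∀ a b : X, a ≠ b → u' a b ≤ G a b + e := by
      intro a b hab
      have h1 : IsUltra (fun x y => if x = y then 0 else u' x y + (-e)) := isUltra_shift (-e) hu'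
      have h2 : ∀ c d : X, c ≠ d → (if c = d then 0 else u' c d + (-e)) ≤ δ c d := by
        intro c d hcd; rw [if_neg hcd]; linarith [hle c d hcd]
      have h3 := le_subd h1 h2 hab
      rw [if_neg hab] at h3
      linarith
    have h3 : δ pstar.1 pstar.2 - e ≤ u' pstar.1 pstar.2 := by
      have h := abs_le.1 (le_dinf (d₁ := δ) (d₂ := u') habstar)
      linarith [h.2]
    have h4 := hmax _ _ habstar
    linarith
  have hMnear : NearestUltra δ M := ⟨hMultra, fun u' hu' => le_trans hdinfM (hlower u' hu')⟩
  have hchar : ∀ u : X → X → ℝ, NearestUltra δ u ↔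
      (IsUltra u ∧ ∀ a b : X, a ≠ b → δ a b - t ≤ u a b ∧ u a b ≤ M a b) := by
    intro u
    constructor
    · rintro ⟨hu, hmin⟩
      have hd : dinf δ u ≤ t := le_trans (hmin M hMultra) hdinfM
      have habs : ∀ a b : X, a ≠ b → |δ a b - u a b| ≤ t :=
        fun a b hab => le_trans (le_dinf hab) hd
      refine ⟨hu, fun a b hab => ⟨?_, ?_⟩⟩
      · have h := abs_le.1 (habs a b hab); linarith [h.2]
      · refine hupper u hu (fun a' b' hab' => ?_) a b hab
        have h := abs_le.1 (habs a' b' hab'); linarith [h.1]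
    · rintro ⟨hu, hb⟩
      refine ⟨hu, fun u' hu' => le_trans (dinf_le hne fun a b hab => ?_) (hlower u' hu')⟩
      have h := hb a b hab
      have hMd := hMval a b hab
      have hG' := hGle a b hab
      rw [abs_le]
      constructor
      · rw [hMd] at h; linarith [h.2]
      · linarith [h.1]
  have hpin : ∀ u : X → X → ℝ, NearestUltra δ u →
      u pstar.1 pstar.2 = M pstar.1 pstar.2 := by
    intro u hu
    have hb := ((hchar u).1 hu).2 _ _ habstar
    have hMd := hMval _ _ habstar
    refine le_antisymm hb.2 ?_
    rw [hMd]; linarith [hb.1, hstar]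
  set Γ : Finset ℝ := (P.image fun p => δ p.1 p.2 - t) ∪ (P.image fun p => G p.1 p.2 + t)
    with hΓdef
  have hLmem : ∀ a b : X, a ≠ b → δ a b - t ∈ Γ := fun a b hab =>
    Finset.mem_union_left _ (Finset.mem_image.2 ⟨(a, b), hmemP hab, rfl⟩)
  have hMmemΓ : ∀ a b : X, a ≠ b → M a b ∈ Γ := fun a b hab => by
    rw [hMval a b hab]
    exact Finset.mem_union_right _ (Finset.mem_image.2 ⟨(a, b), hmemP hab, rfl⟩)
  set Γ0 : Finset ℝ := insert 0 Γ with hΓ0def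
  set fl : ℝ → ℝ := fun x =>
    if h : (Γ.filter (· ≤ x)).Nonempty then (Γ.filter (· ≤ x)).max' h else 0 with hfldef
  set ce : ℝ → ℝ := fun x =>
    if h : (Γ.filter (x ≤ ·)).Nonempty then (Γ.filter (x ≤ ·)).min' h else 0 with hcedef
  have hfl_mem : ∀ {x γ : ℝ}, γ ∈ Γ → γ ≤ x → fl x ∈ Γ ∧ fl x ≤ x ∧ γ ≤ fl x := by
    intro x γ hγ hγx
    have h1 : (Γ.filter (· ≤ x)).Nonempty := ⟨γ, Finset.mem_filter.2 ⟨hγ, hγx⟩⟩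
    simp only [hfldef]
    rw [dif_pos h1]
    have hm := Finset.max'_mem _ h1
    rw [Finset.mem_filter] at hm
    exact ⟨hm.1, hm.2, Finset.le_max' (Γ.filter (· ≤ x)) γ (Finset.mem_filter.2 ⟨hγ, hγx⟩)⟩
  have hfl_mono : ∀ {x y γ : ℝ}, γ ∈ Γ → γ ≤ x → x ≤ y → fl x ≤ fl y := by
    intro x y γ hγ hγx hxy
    have h1 : (Γ.filter (· ≤ x)).Nonempty := ⟨γ, Finset.mem_filter.2 ⟨hγ, hγx⟩⟩
    have h2 : (Γ.filter (· ≤ y)).Nonempty := ⟨γ, Finset.mem_filter.2 ⟨hγ, le_trans hγx hxy⟩⟩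
    simp only [hfldef]
    rw [dif_pos h1, dif_pos h2]
    refine Finset.max'_subset h1 ?_
    intro z hz
    rw [Finset.mem_filter] at hz ⊢
    exact ⟨hz.1, le_trans hz.2 hxy⟩
  have hce_mem : ∀ {x γ : ℝ}, γ ∈ Γ → x ≤ γ → ce x ∈ Γ ∧ x ≤ ce x ∧ ce x ≤ γ := by
    intro x γ hγ hγx
    have h1 : (Γ.filter (x ≤ ·)).Nonempty := ⟨γ, Finset.mem_filter.2 ⟨hγ, hγx⟩⟩
    simp only [hcedef]
    rw [dif_pos h1]
    have hm := Finset.min'_mem _ h1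
    rw [Finset.mem_filter] at hm
    exact ⟨hm.1, hm.2, Finset.min'_le (Γ.filter (x ≤ ·)) γ (Finset.mem_filter.2 ⟨hγ, hγx⟩)⟩
  have hce_eq : ∀ {x : ℝ}, x ∈ Γ → ce x = x := by
    intro x hx
    have h := hce_mem hx (le_refl x)
    exact le_antisymm h.2.2 h.2.1
  set V : Finset (X → X → ℝ) :=
    ((Finset.univ : Finset (X → X → {γ : ℝ // γ ∈ Γ0})).image
      (fun f => fun x y => (f x y : ℝ))).filter (fun w => NearestUltra δ w) with hVdef
  have hVmem : ∀ w : X → X → ℝ, (∀ x y, w x y ∈ Γ0) → NearestUltra δ w → w ∈ V := by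
    intro w hw hnear
    rw [hVdef]
    rw [Finset.mem_filter]
    refine ⟨Finset.mem_image.2 ⟨fun x y => ⟨w x y, hw x y⟩, Finset.mem_univ _, rfl⟩, hnear⟩
  have hVprop : ∀ w ∈ V, NearestUltra δ w := by
    intro w hw
    rw [hVdef, Finset.mem_filter] at hw
    exact hw.2
  have hMΓ0 : ∀ x y : X, M x y ∈ Γ0 := by
    intro x y
    by_cases h : x = y
    · simp only [hM]; rw [if_pos h]; exact Finset.mem_insert_self 0 Γ
    · exact Finset.mem_insert_of_mem (hMmemΓ x y h)
  have hVne : V.Nonempty := ⟨M, hVmem M hMΓ0 hMnear⟩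
  have hsub1 : tconv V hVne ⊆ {u | NearestUltra δ u} := by
    rintro d ⟨lam, hlam0, hd⟩
    have hvult : ∀ v ∈ V, IsUltra v := fun v hv => (hVprop v hv).1
    have hlamle : ∀ v ∈ V, lam v ≤ 0 := fun v hv => hlam0 ▸ Finset.le_sup' lam hv
    have hult : IsUltra d := by
      rw [isUltra_iff']
      refine ⟨⟨?_, ?_⟩, ?_⟩
      · intro x
        rw [hd x x, ← hlam0]
        refine Finset.sup'_congr hVne rfl fun v hv => ?_
        rw [(hvult v hv).1.1 x, add_zero]
      · intro x y
        rw [hd x y, hd y x]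
        refine Finset.sup'_congr hVne rfl fun v hv => ?_
        rw [(hvult v hv).1.2 x y]
      · intro x y z hxy hxz hyz
        rw [hd x y]
        refine Finset.sup'_le _ _ fun v hv => ?_
        have h1 := ((isUltra_iff' v).1 (hvult v hv)).2 x y z hxy hxz hyz
        rcases le_max_iff.1 h1 with h | h
        · refine le_max_of_le_left ?_
          rw [hd x z]
          exact le_trans (by linarith) (Finset.le_sup' (fun v => lam v + v x z) hv)
        · refine le_max_of_le_right ?_
          rw [hd y z]
          exact le_trans (by linarith) (Finset.le_sup' (fun v => lam v + v y z) hv)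
    refine (hchar d).2 ⟨hult, fun a b hab => ⟨?_, ?_⟩⟩
    · obtain ⟨v₀, hv₀, hv₀eq⟩ := V.exists_mem_eq_sup' hVne lam
      have h0 : lam v₀ = 0 := by rw [← hv₀eq, hlam0]
      have hb := ((hchar v₀).1 (hVprop v₀ hv₀)).2 a b hab
      rw [hd a b]
      refine le_trans ?_ (Finset.le_sup' (fun v => lam v + v a b) hv₀)
      rw [h0]; linarith [hb.1]
    · rw [hd a b]
      refine Finset.sup'_le _ _ fun v hv => ?_
      have hb := ((hchar v).1 (hVprop v hv)).2 a b hab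
      linarith [hlamle v hv, hb.2]
  have hsub2 : {u | NearestUltra δ u} ⊆ tconv V hVne := by
    intro u hu
    obtain ⟨huult, hub⟩ := (hchar u).1 hu
    have key : ∀ a b : X, a ≠ b → ∃ w ∈ V,
        w a b = ce (u a b) ∧ u a b ≤ ce (u a b) ∧
        ∀ x y : X, x ≠ y → w x y - ce (u a b) ≤ u x y - u a b := by
      intro a b hab
      have hcM : u a b ≤ M a b := (hub a b hab).2
      have hceF := hce_mem (hMmemΓ a b hab) hcM
      set c : ℝ := u a b with hc
      set dd : ℝ := ce c with hdd
      set ψ : ℝ → ℝ := fun v => if v < c then fl v else max dd (fl v) with hψ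
      set w : X → X → ℝ := fun x y => if x = y then 0 else ψ (u x y) with hw
      have hψmono : ∀ v₁ v₂ : ℝ, (∃ γ ∈ Γ, γ ≤ v₁) → v₁ ≤ v₂ → ψ v₁ ≤ ψ v₂ := by
        rintro v₁ v₂ ⟨γ, hγ, hγle⟩ h12
        have hflm : fl v₁ ≤ fl v₂ := hfl_mono hγ hγle h12
        simp only [hψ]
        by_cases h1 : v₁ < c
        · by_cases h2 : v₂ < c
          · rw [if_pos h1, if_pos h2]; exact hflm
          · rw [if_pos h1, if_neg h2]
            exact le_trans hflm (le_max_right _ _)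
        · have h2 : ¬ v₂ < c := fun h => h1 (lt_of_le_of_lt h12 h)
          rw [if_neg h1, if_neg h2]
          exact max_le_max (le_refl dd) hflm
      have hwult : IsUltra w := by
        rw [isUltra_iff']
        refine ⟨⟨fun x => by simp [hw], ?_⟩, ?_⟩
        · intro x y
          by_cases h : x = y
          · simp only [hw]; rw [if_pos h, if_pos h.symm]
          · simp only [hw]
            rw [if_neg h, if_neg (Ne.symm h), huult.1.2 x y]
        · intro x y z hxy hxz hyz
          simp only [hw]
          rw [if_neg hxy, if_neg hxz, if_neg hyz]
          have h1 := ((isUltra_iff' u).1 huult).2 x y z hxy hxz hyz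
          rcases le_total (u x z) (u y z) with h | h
          · have h2 : u x y ≤ u y z := by rw [max_eq_right h] at h1; exact h1
            exact le_max_of_le_right (hψmono _ _ ⟨_, hLmem x y hxy, (hub x y hxy).1⟩ h2)
          · have h2 : u x y ≤ u x z := by rw [max_eq_left h] at h1; exact h1
            exact le_max_of_le_left (hψmono _ _ ⟨_, hLmem x y hxy, (hub x y hxy).1⟩ h2)
      have hwval : ∀ x y : X, x ≠ y → w x y = ψ (u x y) := by
        intro x y hxy; simp only [hw]; rw [if_neg hxy]
      have hwbounds : ∀ x y : X, x ≠ y → δ x y - t ≤ w x y ∧ w x y ≤ M x y := by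
        intro x y hxy
        have hF := hfl_mem (hLmem x y hxy) (hub x y hxy).1
        rw [hwval x y hxy]
        simp only [hψ]
        by_cases h : u x y < c
        · rw [if_pos h]
          exact ⟨hF.2.2, le_trans hF.2.1 (hub x y hxy).2⟩
        · rw [if_neg h]
          refine ⟨le_trans hF.2.2 (le_max_right _ _), max_le ?_ (le_trans hF.2.1 (hub x y hxy).2)⟩
          exact (hce_mem (hMmemΓ x y hxy) (le_trans (not_lt.1 h) (hub x y hxy).2)).2.2
      have hwΓ0 : ∀ x y : X, w x y ∈ Γ0 := by
        intro x y
        by_cases h : x = y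
        · simp only [hw]; rw [if_pos h]; exact Finset.mem_insert_self 0 Γ
        · have hF := hfl_mem (hLmem x y h) (hub x y h).1
          rw [hwval x y h]
          simp only [hψ]
          by_cases h2 : u x y < c
          · rw [if_pos h2]; exact Finset.mem_insert_of_mem hF.1
          · rw [if_neg h2]
            rcases max_cases dd (fl (u x y)) with ⟨heq, _⟩ | ⟨heq, _⟩ <;> rw [heq]
            · exact Finset.mem_insert_of_mem hceF.1
            · exact Finset.mem_insert_of_mem hF.1
      have hwpin : w a b = dd := by
        rw [hwval a b hab]
        simp only [hψ]
        have hnlt : ¬ u a b < c := by rw [← hc]; exact lt_irrefl c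
        rw [if_neg hnlt]
        have hflc : fl (u a b) ≤ dd := by
          rw [← hc]
          exact le_trans (hfl_mem (hLmem a b hab) (by rw [hc]; exact (hub a b hab).1)).2.1 hceF.2.1
        exact max_eq_left hflc
      have hslope : ∀ x y : X, x ≠ y → w x y - dd ≤ u x y - c := by
        intro x y hxy
        have hF := hfl_mem (hLmem x y hxy) (hub x y hxy).1
        rw [hwval x y hxy]
        simp only [hψ]
        by_cases h : u x y < c
        · rw [if_pos h]
          linarith [hF.2.1, hceF.2.1]
        · rw [if_neg h]
          have h1 : max dd (fl (u x y)) ≤ dd + (u x y - c) :=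
            max_le (by linarith [not_lt.1 h]) (by linarith [hF.2.1, hceF.2.1])
          linarith
      exact ⟨w, hVmem w hwΓ0 ((hchar w).2 ⟨hwult, hwbounds⟩), hwpin, hceF.2.1, hslope⟩
    set lam : (X → X → ℝ) → ℝ :=
      fun w => min 0 (P.inf' hP fun q => u q.1 q.2 - w q.1 q.2) with hlamdef
    have hcomp : ∀ w ∈ V, ∀ x y : X, x ≠ y → lam w + w x y ≤ u x y := by
      intro w _ x y hxy
      have h1 : lam w ≤ u x y - w x y := by
        simp only [hlamdef]
        exact le_trans (min_le_right _ _)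
          (Finset.inf'_le (fun q : X × X => u q.1 q.2 - w q.1 q.2) (hmemP hxy))
      linarith
    have hsup0 : V.sup' hVne lam = 0 := by
      apply le_antisymm
      · exact Finset.sup'_le _ _ fun v _ => min_le_left _ _
      · obtain ⟨w, hwV, hwpin, _, hslope⟩ := key pstar.1 pstar.2 habstar
        have hustar : u pstar.1 pstar.2 = M pstar.1 pstar.2 := hpin u hu
        have hceustar : ce (u pstar.1 pstar.2) = u pstar.1 pstar.2 := by
          rw [hustar]; exact hce_eq (hMmemΓ _ _ habstar)
        have hlamw : lam w = 0 := by
          simp only [hlamdef]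
          have hge : ∀ q ∈ P, (0:ℝ) ≤ u q.1 q.2 - w q.1 q.2 := by
            intro q hq
            have h := hslope q.1 q.2 (hPne hq)
            rw [hceustar] at h
            linarith
          exact min_eq_left (Finset.le_inf' hP _ hge)
        calc (0:ℝ) = lam w := hlamw.symm
          _ ≤ _ := Finset.le_sup' lam hwV
    refine ⟨lam, hsup0, fun x y => ?_⟩
    by_cases hxy : x = y
    · subst hxy
      rw [huult.1.1 x]
      have he : V.sup' hVne (fun v => lam v + v x x) = V.sup' hVne lam :=
        Finset.sup'_congr hVne rfl fun v hv => by rw [(hVprop v hv).1.1.1 x, add_zero]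
      rw [he, hsup0]
    · obtain ⟨w, hwV, hwpin, hcedd, hslope⟩ := key x y hxy
      apply le_antisymm
      · refine le_trans ?_ (Finset.le_sup' (fun v => lam v + v x y) hwV)
        have hlamw : lam w = u x y - ce (u x y) := by
          simp only [hlamdef]
          have h1 : P.inf' hP (fun q => u q.1 q.2 - w q.1 q.2) = u x y - ce (u x y) := by
            apply le_antisymm
            · have h := Finset.inf'_le (fun q : X × X => u q.1 q.2 - w q.1 q.2) (hmemP hxy)
              rw [hwpin] at h
              exact h
            · refine Finset.le_inf' hP _ fun q hq => ?_
              linarith [hslope q.1 q.2 (hPne hq)]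
          rw [h1]
          exact min_eq_right (by linarith)
        rw [hlamw, hwpin]
        linarith
      · exact Finset.sup'_le _ _ fun v hv => hcomp v hv x y hxy
  refine ⟨V, hVne, fun v hv => (hVprop v hv).1, ?_, ⟨M, hMnear⟩⟩
  exact Set.Subset.antisymm hsub2 hsub1
end

section
/- Let X be a finite set with |X| ≥ 2 and let δ be a dissimilarity map on X. If u and w are ultrametrics on X that are l∞-nearest to δ, and λ,μ ∈ ℝ satisfy max(λ,μ) = 0, then the dissimilarity map {x,y} ↦ max(λ + u{x,y}, μ + w{x,y}) is again an ultrametric that is l∞-nearest to δ. In other words, the set of ultrametrics l∞-nearest to δ is tropically convex. -/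
lemma tri_aux (a b c : ℝ) (h1 : a ≤ max b c) (h2 : b ≤ max a c) (h3 : c ≤ max a b) :
    (a = b ∧ c ≤ a) ∨ (a = c ∧ b ≤ a) ∨ (b = c ∧ a ≤ b) := by
  rcases le_total a b with hab | hab
  · rcases le_total b c with hbc | hbc
    · rw [max_eq_right hab] at h3
      exact Or.inr (Or.inr ⟨le_antisymm hbc h3, hab⟩)
    · rcases le_total a c with hac | hac
      · rw [max_eq_right hac] at h2
        exact Or.inr (Or.inr ⟨le_antisymm h2 hbc, hab⟩)
      · rw [max_eq_left hac] at h2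
        exact Or.inl ⟨le_antisymm hab h2, by linarith⟩
  · rcases le_total a c with hac | hac
    · rw [max_eq_left hab] at h3
      exact Or.inr (Or.inl ⟨le_antisymm hac h3, hab⟩)
    · rcases le_total b c with hbc | hbc
      · rw [max_eq_right hbc] at h1
        exact Or.inr (Or.inl ⟨le_antisymm h1 hac, hab⟩)
      · rw [max_eq_left hbc] at h1
        exact Or.inl ⟨le_antisymm h1 hab, hac⟩

lemma ultra_le_max {X : Type*} {d : X → X → ℝ} (h : IsUltra d) :
    ∀ x y z : X, x ≠ y → x ≠ z → y ≠ z → d x y ≤ max (d x z) (d y z) := by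
  intro x y z hxy hxz hyz
  rcases h.2 x y z hxy hxz hyz with ⟨h1, _⟩ | ⟨h1, _⟩ | ⟨_, h2⟩
  · exact h1.le.trans (le_max_left _ _)
  · exact h1.le.trans (le_max_right _ _)
  · exact h2.trans (le_max_left _ _)

lemma bdd_aux {X : Type*} [Fintype X] (d₁ d₂ : X → X → ℝ) :
    BddAbove {r | ∃ x y : X, x ≠ y ∧ r = |d₁ x y - d₂ x y|} := by
  apply Set.Finite.bddAbove
  apply Set.Finite.subset (Set.finite_range fun p : X × X => |d₁ p.1 p.2 - d₂ p.1 p.2|)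
  rintro r ⟨x, y, _, rfl⟩
  exact ⟨(x, y), rfl⟩

lemma mem_le_dinf {X : Type*} [Fintype X] (d₁ d₂ : X → X → ℝ) {x y : X} (hxy : x ≠ y) :
    |d₁ x y - d₂ x y| ≤ dinf d₁ d₂ :=
  le_csSup (bdd_aux d₁ d₂) ⟨x, y, hxy, rfl⟩

/-- The set of ultrametrics `l∞`-nearest to a dissimilarity map is tropically convex:
it is closed under tropical convex combinations `max(λ + u, μ + w)` with `max(λ,μ) = 0`. -/
theorem stmt1 {X : Type*} [Fintype X] (hcard : 2 ≤ Fintype.card X)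
    (δ : X → X → ℝ) (hδ : IsDissim δ) (u w : X → X → ℝ)
    (hu : NearestUltra δ u) (hw : NearestUltra δ w)
    (lam mu : ℝ) (hlm : max lam mu = 0) :
    NearestUltra δ (fun x y => max (lam + u x y) (mu + w x y)) := by
  have hlam : lam ≤ 0 := hlm ▸ le_max_left lam mu
  have hmu : mu ≤ 0 := hlm ▸ le_max_right lam mu
  obtain ⟨⟨⟨hu0, husym⟩, hutri⟩, humin⟩ := id hu
  obtain ⟨⟨⟨hw0, hwsym⟩, hwtri⟩, hwmin⟩ := id hw
  set v : X → X → ℝ := fun x y => max (lam + u x y) (mu + w x y) with hv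
  have hvsymm : ∀ x y, v x y = v y x := by
    intro x y; simp only [hv, husym x y, hwsym x y]
  have hvmax : ∀ x y z : X, x ≠ y → x ≠ z → y ≠ z → v x y ≤ max (v x z) (v y z) := by
    intro x y z hxy hxz hyz
    apply max_le
    · have h := ultra_le_max hu.1 x y z hxy hxz hyz
      rcases le_max_iff.mp h with h' | h'
      · exact le_max_of_le_left (le_max_of_le_left (by linarith))
      · exact le_max_of_le_right (le_max_of_le_left (by linarith))
    · have h := ultra_le_max hw.1 x y z hxy hxz hyz
      rcases le_max_iff.mp h with h' | h'
      · exact le_max_of_le_left (le_max_of_le_right (by linarith))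
      · exact le_max_of_le_right (le_max_of_le_right (by linarith))
  have hvultra : IsUltra v := by
    refine ⟨⟨fun x => ?_, fun x y => hvsymm x y⟩, ?_⟩
    · simp only [hv]; rw [hu0 x, hw0 x, add_zero, add_zero]; exact hlm
    · intro x y z hxy hxz hyz
      have h1 := hvmax x y z hxy hxz hyz
      have h2 := hvmax x z y hxz hxy hyz.symm
      have h3 := hvmax y z x hyz hxy.symm hxz.symm
      rw [hvsymm z y] at h2
      rw [hvsymm y x, hvsymm z x] at h3
      exact tri_aux _ _ _ h1 h2 h3
  refine ⟨hvultra, fun u' hu' => le_trans ?_ (hu.2 u' hu')⟩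
  have hwu : dinf δ w ≤ dinf δ u := hw.2 u hu.1
  obtain ⟨a, b, hab⟩ := Fintype.exists_pair_of_one_lt_card (by omega : 1 < Fintype.card X)
  have hnn : 0 ≤ dinf δ u := le_trans (abs_nonneg _) (mem_le_dinf δ u hab)
  apply Real.sSup_le _ hnn
  rintro r ⟨x, y, hxy, rfl⟩
  have h1 : |δ x y - u x y| ≤ dinf δ u := mem_le_dinf δ u hxy
  have h2 : |δ x y - w x y| ≤ dinf δ u := le_trans (mem_le_dinf δ w hxy) hwu
  rw [abs_le] at h1 h2 ⊢
  constructor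
  · -- -(dinf δ u) ≤ δ x y - v x y, i.e. v x y ≤ δ x y + dinf δ u
    have : v x y ≤ δ x y + dinf δ u := by
      apply max_le <;> linarith [h1.2, h2.2]
    linarith
  · -- δ x y - v x y ≤ dinf δ u
    rcases max_choice lam mu with h | h <;> rw [h] at hlm
    · have : lam + u x y ≤ v x y := le_max_left _ _
      linarith [h1.1]
    · have : mu + w x y ≤ v x y := le_max_right _ _
      linarith [h2.1]
end

section
/- Let X be a finite set with |X| ≥ 2 and let δ be a dissimilarity map on X. Define δ_u{x,y} to be the minimum, over all finite sequences x = v₀, v₁, …, v_k = y of pairwise distinct elements of X with k ≥ 1, of max_{1≤i≤k} δ{v_{i−1}, v_i}, and let d = ‖δ − δ_u‖∞. Then the dissimilarity map u* defined by u*{x,y} = δ_u{x,y} + d/2 is an ultrametric on X, ‖δ − u*‖∞ = d/2, and every ultrametric u on X satisfies ‖δ − u‖∞ ≥ d/2. In particular u* is an ultrametric l∞-nearest to δ. -/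
/-- `(pathMin δ) x y` is the minimum, over all sequences `x = v₀, v₁, …, v_k = y`
(`k ≥ 1`) of pairwise distinct elements, of `max_{1 ≤ i ≤ k} δ(v_{i-1}, v_i)`.
This is the subdominant ultrametric `δ_u` of Chepoi--Fichet. -/
noncomputable def pathMin {X : Type*} (δ : X → X → ℝ) (x y : X) : ℝ :=
  sInf {r | ∃ (k : ℕ) (v : ℕ → X), 1 ≤ k ∧ v 0 = x ∧ v k = y ∧
    (∀ i j, i ≤ k → j ≤ k → i ≠ j → v i ≠ v j) ∧
    r = sSup {s | ∃ i < k, s = δ (v i) (v (i + 1))}}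


section Aux
open SimpleGraph

variable {X : Type*}

lemma walk_getVert_mem_support {G : SimpleGraph X} {u v : X} (p : G.Walk u v) (i : ℕ) :
    p.getVert i ∈ p.support := by
  induction p generalizing i with
  | nil =>
    rw [SimpleGraph.Walk.getVert_of_length_le _ (by simp : (Walk.nil).length ≤ i)]
    simp
  | cons h q ih =>
    cases i with
    | zero => simp [SimpleGraph.Walk.getVert_zero]
    | succ n =>
      rw [SimpleGraph.Walk.getVert_cons_succ]
      simp [ih n]

lemma walk_isPath_getVert_injOn {G : SimpleGraph X} {u v : X} {p : G.Walk u v}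
    (hp : p.IsPath) : ∀ i ≤ p.length, ∀ j ≤ p.length, p.getVert i = p.getVert j → i = j := by
  induction p with
  | nil => intro i hi j hj _; simp at hi hj; omega
  | cons h q ih =>
    intro i hi j hj hij
    rw [SimpleGraph.Walk.cons_isPath_iff] at hp
    cases i with
    | zero =>
      cases j with
      | zero => rfl
      | succ n =>
        exfalso
        rw [SimpleGraph.Walk.getVert_zero, SimpleGraph.Walk.getVert_cons_succ] at hij
        exact hp.2 (hij ▸ walk_getVert_mem_support q n)
    | succ m =>
      cases j with
      | zero =>
        exfalso
        rw [SimpleGraph.Walk.getVert_zero, SimpleGraph.Walk.getVert_cons_succ] at hij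
        exact hp.2 (hij ▸ walk_getVert_mem_support q m)
      | succ n =>
        rw [SimpleGraph.Walk.getVert_cons_succ, SimpleGraph.Walk.getVert_cons_succ] at hij
        simp only [SimpleGraph.Walk.length_cons] at hi hj
        have := ih hp.1 m (by omega) n (by omega) hij
        omega
end Aux

set_option linter.unusedSectionVars false

namespace CF
open SimpleGraph

open SimpleGraph

variable {X : Type*} [Fintype X] [DecidableEq X]

def pathSet (δ : X → X → ℝ) (x y : X) : Set ℝ :=
  {r | ∃ (k : ℕ) (v : ℕ → X), 1 ≤ k ∧ v 0 = x ∧ v k = y ∧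
    (∀ i j, i ≤ k → j ≤ k → i ≠ j → v i ≠ v j) ∧
    r = sSup {s | ∃ i < k, s = δ (v i) (v (i + 1))}}

lemma pathMin_def (δ : X → X → ℝ) (x y : X) : pathMin δ x y = sInf (pathSet δ x y) := rfl

lemma edgeSet_eq (δ : X → X → ℝ) (v : ℕ → X) (k : ℕ) :
    {s | ∃ i < k, s = δ (v i) (v (i + 1))} =
      ↑((Finset.range k).image fun i => δ (v i) (v (i + 1))) := by
  ext s
  simp only [Set.mem_setOf_eq, Finset.coe_image, Set.mem_image, Finset.mem_coe,
    Finset.mem_range]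
  constructor
  · rintro ⟨i, hi, rfl⟩; exact ⟨i, hi, rfl⟩
  · rintro ⟨i, hi, rfl⟩; exact ⟨i, hi, rfl⟩

lemma edgeSet_finite (δ : X → X → ℝ) (v : ℕ → X) (k : ℕ) :
    {s | ∃ i < k, s = δ (v i) (v (i + 1))}.Finite := by
  rw [edgeSet_eq]; exact Finset.finite_toSet _

lemma edgeSet_nonempty (δ : X → X → ℝ) (v : ℕ → X) {k : ℕ} (hk : 1 ≤ k) :
    {s | ∃ i < k, s = δ (v i) (v (i + 1))}.Nonempty :=
  ⟨δ (v 0) (v 1), 0, hk, rfl⟩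

lemma le_edgeSup (δ : X → X → ℝ) (v : ℕ → X) {k i : ℕ} (hi : i < k) :
    δ (v i) (v (i + 1)) ≤ sSup {s | ∃ i < k, s = δ (v i) (v (i + 1))} :=
  le_csSup (edgeSet_finite δ v k).bddAbove ⟨i, hi, rfl⟩

lemma edgeSup_le (δ : X → X → ℝ) (v : ℕ → X) {k : ℕ} (hk : 1 ≤ k) {t : ℝ}
    (h : ∀ i < k, δ (v i) (v (i + 1)) ≤ t) :
    sSup {s | ∃ i < k, s = δ (v i) (v (i + 1))} ≤ t := by
  apply csSup_le (edgeSet_nonempty δ v hk)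
  rintro r ⟨i, hi, rfl⟩; exact h i hi

lemma pathSet_finite (δ : X → X → ℝ) (x y : X) : (pathSet δ x y).Finite := by
  apply (Set.finite_range (fun p : X × X => δ p.1 p.2)).subset
  rintro r ⟨k, v, hk, _, _, _, rfl⟩
  have hmem := (edgeSet_nonempty δ v hk).csSup_mem (edgeSet_finite δ v k)
  obtain ⟨i, _, he⟩ := hmem
  exact ⟨(v i, v (i + 1)), he.symm⟩

lemma delta_mem_pathSet (δ : X → X → ℝ) {x y : X} (h : x ≠ y) :
    δ x y ∈ pathSet δ x y := by
  refine ⟨1, fun i => if i = 0 then x else y, le_refl 1, by simp, by simp, ?_, ?_⟩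
  · intro i j hi hj hij
    interval_cases i <;> interval_cases j <;> simp_all <;> exact fun h' => h h'.symm
  · have : {s | ∃ i < 1, s = δ ((fun i => if i = 0 then x else y) i)
        ((fun i => if i = 0 then x else y) (i + 1))} = {δ x y} := by
      ext s; simp [Nat.lt_one_iff]
    rw [this, csSup_singleton]

lemma pathSet_nonempty (δ : X → X → ℝ) {x y : X} (h : x ≠ y) :
    (pathSet δ x y).Nonempty := ⟨_, delta_mem_pathSet δ h⟩

lemma pathMin_mem (δ : X → X → ℝ) {x y : X} (h : x ≠ y) :
    pathMin δ x y ∈ pathSet δ x y :=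
  (pathSet_nonempty δ h).csInf_mem (pathSet_finite δ x y)

lemma pathMin_le (δ : X → X → ℝ) {x y : X} {r : ℝ} (hr : r ∈ pathSet δ x y) :
    pathMin δ x y ≤ r :=
  csInf_le (pathSet_finite δ x y).bddBelow hr

lemma pathMin_le_delta (δ : X → X → ℝ) {x y : X} (h : x ≠ y) :
    pathMin δ x y ≤ δ x y :=
  pathMin_le δ (delta_mem_pathSet δ h)

/-- threshold graph -/
def G (δ : X → X → ℝ) (t : ℝ) : SimpleGraph X where
  Adj a b := a ≠ b ∧ δ a b ≤ t ∧ δ b a ≤ t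
  symm := by constructor; rintro a b ⟨h1, h2, h3⟩; exact ⟨h1.symm, h3, h2⟩
  loopless := by constructor; rintro a ⟨h1, _⟩; exact h1 rfl

lemma reach_of_chain (δ : X → X → ℝ) (t : ℝ) :
    ∀ (k : ℕ) (v : ℕ → X), (∀ i < k, (G δ t).Adj (v i) (v (i + 1))) →
      (G δ t).Reachable (v 0) (v k) := by
  intro k
  induction k with
  | zero => intro v _; exact Reachable.refl _
  | succ n ih =>
    intro v h
    exact (ih v fun i hi => h i (by omega)).trans
      (Adj.reachable (h n (by omega)))

lemma pathMin_le_iff (δ : X → X → ℝ) (hδ : IsDissim δ) {x y : X} (h : x ≠ y) (t : ℝ) :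
    pathMin δ x y ≤ t ↔ (G δ t).Reachable x y := by
  constructor
  · intro ht
    obtain ⟨k, v, hk, hv0, hvk, hdis, hr⟩ := pathMin_mem δ h
    have hedge : ∀ i < k, (G δ t).Adj (v i) (v (i + 1)) := by
      intro i hi
      refine ⟨hdis i (i + 1) (by omega) (by omega) (by omega), ?_, ?_⟩
      · exact le_trans (le_edgeSup δ v hi) (hr ▸ ht)
      · rw [hδ.2]
        exact le_trans (le_edgeSup δ v hi) (hr ▸ ht)
    have := reach_of_chain δ t k v hedge
    rwa [hv0, hvk] at this
  · rintro ⟨p⟩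
    set q : (G δ t).Walk x y := (p.toPath : (G δ t).Walk x y) with hq
    have hqp : q.IsPath := p.toPath.property
    have hk : 1 ≤ q.length := by
      by_contra hcon
      exact h (q.eq_of_length_eq_zero (by omega))
    refine le_trans (pathMin_le δ (r := sSup {s | ∃ i < q.length,
        s = δ (q.getVert i) (q.getVert (i + 1))}) ?_) ?_
    · exact ⟨q.length, q.getVert, hk, q.getVert_zero, q.getVert_length,
        fun i j hi hj hij => fun hc =>
          hij (walk_isPath_getVert_injOn hqp i hi j hj hc), rfl⟩
    · apply edgeSup_le δ q.getVert hk
      intro i hi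
      exact (q.adj_getVert_succ hi).2.1

lemma pathMin_symm (δ : X → X → ℝ) (hδ : IsDissim δ) {x y : X} (h : x ≠ y) :
    pathMin δ x y = pathMin δ y x := by
  have h1 : pathMin δ x y ≤ pathMin δ y x := by
    rw [pathMin_le_iff δ hδ h]
    exact ((pathMin_le_iff δ hδ h.symm _).mp le_rfl).symm
  have h2 : pathMin δ y x ≤ pathMin δ x y := by
    rw [pathMin_le_iff δ hδ h.symm]
    exact ((pathMin_le_iff δ hδ h _).mp le_rfl).symm
  linarith

lemma pathMin_triangle (δ : X → X → ℝ) (hδ : IsDissim δ) {x y z : X}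
    (hxy : x ≠ y) (hxz : x ≠ z) (hyz : y ≠ z) :
    pathMin δ x z ≤ max (pathMin δ x y) (pathMin δ y z) := by
  set t := max (pathMin δ x y) (pathMin δ y z)
  rw [pathMin_le_iff δ hδ hxz]
  have r1 : (G δ t).Reachable x y := (pathMin_le_iff δ hδ hxy t).mp (le_max_left _ _)
  have r2 : (G δ t).Reachable y z := (pathMin_le_iff δ hδ hyz t).mp (le_max_right _ _)
  exact r1.trans r2




set_option linter.unusedSectionVars false

lemma dinfSet_finite (d₁ d₂ : X → X → ℝ) :
    {r | ∃ x y : X, x ≠ y ∧ r = |d₁ x y - d₂ x y|}.Finite := by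
  apply (Set.finite_range (fun p : X × X => |d₁ p.1 p.2 - d₂ p.1 p.2|)).subset
  rintro r ⟨x, y, _, rfl⟩
  exact ⟨(x, y), rfl⟩

lemma dinfSet_nonempty (hcard : 2 ≤ Fintype.card X) (d₁ d₂ : X → X → ℝ) :
    {r | ∃ x y : X, x ≠ y ∧ r = |d₁ x y - d₂ x y|}.Nonempty := by
  obtain ⟨a, b, hab⟩ := Fintype.exists_pair_of_one_lt_card hcard
  exact ⟨_, a, b, hab, rfl⟩

lemma abs_le_dinf (d₁ d₂ : X → X → ℝ) {x y : X} (h : x ≠ y) :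
    |d₁ x y - d₂ x y| ≤ dinf d₁ d₂ :=
  le_csSup (dinfSet_finite d₁ d₂).bddAbove ⟨x, y, h, rfl⟩

lemma dinf_mem (hcard : 2 ≤ Fintype.card X) (d₁ d₂ : X → X → ℝ) :
    ∃ x y : X, x ≠ y ∧ dinf d₁ d₂ = |d₁ x y - d₂ x y| :=
  (dinfSet_nonempty hcard d₁ d₂).csSup_mem (dinfSet_finite d₁ d₂)

lemma two_max {a b c : ℝ} (h1 : a ≤ max b c) (h2 : b ≤ max a c) (h3 : c ≤ max a b) :
    (a = b ∧ c ≤ a) ∨ (a = c ∧ b ≤ a) ∨ (b = c ∧ a ≤ b) := by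
  rcases le_total b c with h | h
  · rw [max_eq_right h] at h1
    rcases le_total a b with h' | h'
    · rw [max_eq_right h'] at h3
      exact Or.inr (Or.inr ⟨le_antisymm h h3, h'⟩)
    · rw [max_eq_left h'] at h3
      exact Or.inr (Or.inl ⟨le_antisymm h1 h3, h'⟩)
  · rw [max_eq_left h] at h1
    rcases le_total a c with h' | h'
    · rw [max_eq_right h'] at h2
      exact Or.inr (Or.inr ⟨le_antisymm h2 h, by linarith⟩)
    · rw [max_eq_left h'] at h2
      exact Or.inl ⟨le_antisymm h1 h2, by linarith⟩

lemma ultra_triangle {u : X → X → ℝ} (hu : IsUltra u) {x y z : X}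
    (hxy : x ≠ y) (hxz : x ≠ z) (hyz : y ≠ z) :
    u x z ≤ max (u x y) (u y z) := by
  rcases hu.2 x y z hxy hxz hyz with ⟨h1, _⟩ | ⟨_, h2⟩ | ⟨h1, _⟩
  · exact h1 ▸ le_max_left _ _
  · exact le_trans h2 (le_max_left _ _)
  · exact h1 ▸ le_max_right _ _

lemma ultra_chain {u : X → X → ℝ} (hu : IsUltra u) :
    ∀ (k : ℕ), 1 ≤ k → ∀ (v : ℕ → X), (∀ i j, i ≤ k → j ≤ k → i ≠ j → v i ≠ v j) →
      ∀ t : ℝ, (∀ i < k, u (v i) (v (i + 1)) ≤ t) → u (v 0) (v k) ≤ t := by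
  intro k
  induction k with
  | zero => omega
  | succ n ih =>
    intro _ v hdis t hedge
    rcases Nat.eq_zero_or_pos n with hn | hn
    · subst hn; exact hedge 0 (by omega)
    · have h1 : u (v 0) (v n) ≤ t :=
        ih hn v (fun i j hi hj hij => hdis i j (by omega) (by omega) hij) t
          (fun i hi => hedge i (by omega))
      have h2 : u (v n) (v (n + 1)) ≤ t := hedge n (by omega)
      have htri := ultra_triangle hu
        (hdis 0 n (by omega) (by omega) (by omega))
        (hdis 0 (n + 1) (by omega) (by omega) (by omega))
        (hdis n (n + 1) (by omega) (by omega) (by omega))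
      exact le_trans htri (max_le h1 h2)


end CF

/-- Chepoi--Fichet: with `δ_u = pathMin δ` and `d = ‖δ - δ_u‖∞`, the map
`u*{x,y} = δ_u{x,y} + d/2` is an ultrametric with `‖δ - u*‖∞ = d/2`, and every
ultrametric is at `l∞`-distance at least `d/2` from `δ`; so `u*` is `l∞`-nearest to `δ`. -/
theorem stmt2 {X : Type*} [Fintype X] [DecidableEq X] (hcard : 2 ≤ Fintype.card X)
    (δ : X → X → ℝ) (hδ : IsDissim δ) :
    IsUltra (fun x y => if x = y then 0 else pathMin δ x y + dinf δ (pathMin δ) / 2) ∧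
    dinf δ (fun x y => if x = y then 0 else pathMin δ x y + dinf δ (pathMin δ) / 2) =
      dinf δ (pathMin δ) / 2 ∧
    ∀ u : X → X → ℝ, IsUltra u → dinf δ (pathMin δ) / 2 ≤ dinf δ u := by
  obtain ⟨a0, b0, hab0, hd0⟩ := CF.dinf_mem hcard δ (pathMin δ)
  have hdnn : 0 ≤ dinf δ (pathMin δ) := hd0 ▸ abs_nonneg _
  have hdelta_p : ∀ {x y : X}, x ≠ y →
      0 ≤ δ x y - pathMin δ x y ∧ δ x y - pathMin δ x y ≤ dinf δ (pathMin δ) := by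
    intro x y h
    refine ⟨by linarith [CF.pathMin_le_delta δ h], ?_⟩
    calc δ x y - pathMin δ x y ≤ |δ x y - pathMin δ x y| := le_abs_self _
      _ ≤ dinf δ (pathMin δ) := CF.abs_le_dinf δ (pathMin δ) h
  have hach : δ a0 b0 - pathMin δ a0 b0 = dinf δ (pathMin δ) := by
    rw [hd0, abs_of_nonneg (hdelta_p hab0).1]
  refine ⟨⟨⟨fun x => by simp, ?_⟩, ?_⟩, ?_, ?_⟩
  · -- symmetry
    intro x y
    by_cases h : x = y
    · subst h; simp
    · simp only [if_neg h, if_neg (Ne.symm h)]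
      rw [CF.pathMin_symm δ hδ h]
  · -- ultrametric condition
    intro x y z hxy hxz hyz
    simp only [if_neg hxy, if_neg hxz, if_neg hyz]
    have h1 : pathMin δ x z ≤ max (pathMin δ x y) (pathMin δ y z) :=
      CF.pathMin_triangle δ hδ hxy hxz hyz
    have h2 : pathMin δ x y ≤ max (pathMin δ x z) (pathMin δ y z) := by
      have := CF.pathMin_triangle δ hδ hxz hxy (Ne.symm hyz)
      rwa [← CF.pathMin_symm δ hδ hyz] at this
    have h3 : pathMin δ y z ≤ max (pathMin δ x y) (pathMin δ x z) := by
      have := CF.pathMin_triangle δ hδ (Ne.symm hxy) hyz hxz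
      rwa [← CF.pathMin_symm δ hδ hxy] at this
    rcases CF.two_max h2 h1 h3 with ⟨h, h'⟩ | ⟨h, h'⟩ | ⟨h, h'⟩
    · exact Or.inl ⟨by linarith, by linarith⟩
    · exact Or.inr (Or.inl ⟨by linarith, by linarith⟩)
    · exact Or.inr (Or.inr ⟨by linarith, by linarith⟩)
  · -- dinf δ u* = d/2
    have hrfl : dinf δ (fun x y => if x = y then 0 else
        pathMin δ x y + dinf δ (pathMin δ) / 2) = sSup {r | ∃ x y : X, x ≠ y ∧
        r = |δ x y - (if x = y then 0 else pathMin δ x y + dinf δ (pathMin δ) / 2)|} := rfl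
    rw [hrfl]
    have hub : ∀ r ∈ {r | ∃ x y : X, x ≠ y ∧
        r = |δ x y - (if x = y then 0 else pathMin δ x y + dinf δ (pathMin δ) / 2)|},
        r ≤ dinf δ (pathMin δ) / 2 := by
      rintro r ⟨x, y, hxy, rfl⟩
      rw [if_neg hxy]
      obtain ⟨hge, hle⟩ := hdelta_p hxy
      rw [abs_le]
      constructor <;> [linarith; linarith]
    have hmem : dinf δ (pathMin δ) / 2 ∈ {r | ∃ x y : X, x ≠ y ∧
        r = |δ x y - (if x = y then 0 else pathMin δ x y + dinf δ (pathMin δ) / 2)|} := by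
      refine ⟨a0, b0, hab0, ?_⟩
      rw [if_neg hab0,
        show δ a0 b0 - (pathMin δ a0 b0 + dinf δ (pathMin δ) / 2)
          = dinf δ (pathMin δ) / 2 by linarith,
        abs_of_nonneg (by linarith)]
    exact le_antisymm (csSup_le ⟨_, hmem⟩ hub) (le_csSup ⟨_, hub⟩ hmem)
  · -- lower bound
    intro u hu
    obtain ⟨k, v, hk, hv0, hvk, hdis, hr⟩ := CF.pathMin_mem δ hab0
    have hedge : ∀ i < k, u (v i) (v (i + 1)) ≤ pathMin δ a0 b0 + dinf δ u := by
      intro i hi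
      have hne : v i ≠ v (i + 1) := hdis i (i + 1) (by omega) (by omega) (by omega)
      have h1 := abs_le.mp (CF.abs_le_dinf δ u hne)
      have h2 : δ (v i) (v (i + 1)) ≤ pathMin δ a0 b0 := by
        rw [hr]; exact CF.le_edgeSup δ v hi
      linarith [h1.1, h1.2]
    have hchain := CF.ultra_chain hu k hk v hdis _ hedge
    rw [hv0, hvk] at hchain
    have h3 := abs_le.mp (CF.abs_le_dinf δ u hab0)
    linarith [h3.1, h3.2]
end

section
/- Let n ≥ 2 and let δ be a dissimilarity map on [n] = {1,…,n}. Then δ is an ultrametric if and only if every 2-element subset {i,j} of [n] is contained in some δ-minimum spanning tree of the complete graph on [n], where a spanning tree is an (n−1)-element set of 2-element subsets of [n] containing no cycle (equivalently, a maximal acyclic edge set of the complete graph), and a spanning tree T is δ-minimum if its total weight Σ_{e∈T} δ(e) is minimal among all spanning trees. -/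
open SimpleGraph Finset

namespace MSTAux

set_option linter.unusedSectionVars false

variable {V : Type*} [DecidableEq V]

/-- The graph of a finset of edges. -/
def Gr (S : Finset (Sym2 V)) : SimpleGraph V := SimpleGraph.fromEdgeSet ↑S

lemma Gr_adj {S : Finset (Sym2 V)} {a b : V} : (Gr S).Adj a b ↔ s(a, b) ∈ S ∧ a ≠ b := by
  simp [Gr, SimpleGraph.fromEdgeSet_adj]

lemma Gr_sdiff {S : Finset (Sym2 V)} (f : Sym2 V) :
    Gr S \ SimpleGraph.fromEdgeSet {f} = Gr (S.erase f) := by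
  ext a b
  simp only [SimpleGraph.sdiff_adj, Gr_adj, SimpleGraph.fromEdgeSet_adj, Set.mem_singleton_iff,
    Finset.mem_erase]
  tauto

lemma Gr_edgeSet {S : Finset (Sym2 V)} (hnd : ∀ e ∈ S, ¬ e.IsDiag) :
    (Gr S).edgeSet = ↑S := by
  rw [Gr, SimpleGraph.edgeSet_fromEdgeSet]
  ext e
  simp only [Set.mem_diff, Finset.mem_coe, Set.mem_setOf_eq, and_iff_left_iff_imp]
  exact fun h => hnd e h

lemma acy_iff {S : Finset (Sym2 V)} :
    (Gr S).IsAcyclic ↔ ∀ a b : V, s(a, b) ∈ S → a ≠ b →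
      ¬ (Gr (S.erase s(a, b))).Reachable a b := by
  rw [SimpleGraph.isAcyclic_iff_forall_adj_isBridge]
  constructor
  · intro h a b hm hne
    have := (SimpleGraph.isBridge_iff.mp (h (Gr_adj.mpr ⟨hm, hne⟩)))
    rwa [SimpleGraph.deleteEdges, Gr_sdiff] at this
  · intro h a b hadj
    rw [SimpleGraph.isBridge_iff, SimpleGraph.deleteEdges, Gr_sdiff]
    exact h a b (Gr_adj.mp hadj).1 (Gr_adj.mp hadj).2

lemma reach_mono {S S' : Finset (Sym2 V)} (h : S' ⊆ S) {a b : V}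
    (hr : (Gr S').Reachable a b) : (Gr S).Reachable a b :=
  hr.mono (SimpleGraph.fromEdgeSet_mono (by exact_mod_cast h))

lemma acy_anti {S S' : Finset (Sym2 V)} (h : S' ⊆ S) (hacy : (Gr S).IsAcyclic) :
    (Gr S').IsAcyclic := by
  rw [acy_iff] at hacy ⊢
  intro a b hm hne hr
  exact hacy a b (h hm) hne (reach_mono (Finset.erase_subset_erase _ h) hr)

lemma reach_insert {S : Finset (Sym2 V)} {u v a b : V} (huv : u ≠ v)
    (hr : (Gr (insert s(u, v) S)).Reachable a b) :
    (Gr S).Reachable a b ∨ ((Gr S).Reachable a u ∧ (Gr S).Reachable v b) ∨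
      ((Gr S).Reachable a v ∧ (Gr S).Reachable u b) := by
  obtain ⟨w⟩ := hr
  induction w with
  | nil => exact Or.inl (SimpleGraph.Reachable.refl _)
  | @cons a c b hadj p IH =>
    rcases IH with h1 | ⟨h1, h2⟩ | ⟨h1, h2⟩ <;>
    · obtain ⟨hm, hne⟩ := Gr_adj.mp hadj
      rcases Finset.mem_insert.mp hm with he | hS
      · rcases Sym2.eq_iff.mp he with ⟨rfl, rfl⟩ | ⟨rfl, rfl⟩ <;>
        · first
          | exact Or.inr (Or.inl ⟨SimpleGraph.Reachable.refl _, h1⟩)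
          | exact Or.inr (Or.inr ⟨SimpleGraph.Reachable.refl _, h1⟩)
          | exact Or.inl h2
          | exact Or.inl (h1.symm.trans h2)
      · have hac : (Gr S).Reachable a c := ((Gr_adj.mpr ⟨hS, hne⟩) : (Gr S).Adj a c).reachable
        first
        | exact Or.inl (hac.trans h1)
        | exact Or.inr (Or.inl ⟨hac.trans h1, h2⟩)
        | exact Or.inr (Or.inr ⟨hac.trans h1, h2⟩)

lemma acy_insert {S : Finset (Sym2 V)} {u v : V} (hacy : (Gr S).IsAcyclic) (huv : u ≠ v)
    (hnr : ¬ (Gr S).Reachable u v) : (Gr (insert s(u, v) S)).IsAcyclic := by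
  have hns : s(u, v) ∉ S := fun h => hnr ((Gr_adj.mpr ⟨h, huv⟩) : (Gr S).Adj u v).reachable
  rw [acy_iff]
  intro a b hab hne hr
  rcases Finset.mem_insert.mp hab with he | hS
  · rw [he, Finset.erase_insert hns] at hr
    rcases Sym2.eq_iff.mp he with ⟨rfl, rfl⟩ | ⟨rfl, rfl⟩
    · exact hnr hr
    · exact hnr hr.symm
  · have hfe : s(u, v) ≠ s(a, b) := fun h => hns (h ▸ hS)
    rw [Finset.erase_insert_of_ne hfe] at hr
    rcases reach_insert huv hr with h1 | ⟨h1, h2⟩ | ⟨h1, h2⟩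
    · exact acy_iff.mp hacy a b hS hne h1
    · have h1' := reach_mono (Finset.erase_subset _ _) h1
      have h2' := reach_mono (Finset.erase_subset _ _) h2
      exact hnr (h1'.symm.trans (((Gr_adj.mpr ⟨hS, hne⟩) : (Gr S).Adj a b).reachable.trans h2'.symm))
    · have h1' := reach_mono (Finset.erase_subset _ _) h1
      have h2' := reach_mono (Finset.erase_subset _ _) h2
      exact hnr ((h2'.trans ((Gr_adj.mpr ⟨hS, hne⟩) : (Gr S).Adj a b).reachable.symm).trans h1')

lemma reach_erase_cases {S : Finset (Sym2 V)} {x y z : V} (hxy : x ≠ y) (he : s(x, y) ∈ S)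
    (hr : (Gr S).Reachable z x) :
    (Gr (S.erase s(x, y))).Reachable z x ∨ (Gr (S.erase s(x, y))).Reachable z y := by
  rw [← Finset.insert_erase he] at hr
  rcases reach_insert hxy hr with h1 | ⟨h1, _⟩ | ⟨h1, _⟩
  · exact Or.inl h1
  · exact Or.inl h1
  · exact Or.inr h1

lemma pathsplit {S : Finset (Sym2 V)} (hacy : (Gr S).IsAcyclic) {i j : V}
    (p : (Gr S).Walk i j) (hp : p.IsPath) {f : Sym2 V} (hf : f ∈ p.edges) :
    ¬ (Gr (S.erase f)).Reachable i j := by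
  induction p with
  | nil => simp at hf
  | @cons i c j hadj q IH =>
    rw [SimpleGraph.Walk.cons_isPath_iff] at hp
    have hqe : ∀ e ∈ q.edges, e ∈ (Gr S).edgeSet := fun e he => q.edges_subset_edgeSet he
    have hic_notin : s(i, c) ∉ q.edges := fun h => hp.2 (SimpleGraph.Walk.fst_mem_support_of_mem_edges q h)
    have hf' : f = s(i, c) ∨ f ∈ q.edges := by
      simpa [SimpleGraph.Walk.edges_cons] using hf
    rcases hf' with rfl | hfq
    · intro hr
      have hq' : ∀ e ∈ q.edges, e ∈ (Gr (S.erase s(i, c))).edgeSet := by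
        intro e he
        have h1 := hqe e he
        simp only [Gr] at h1 ⊢
        rw [SimpleGraph.edgeSet_fromEdgeSet] at h1 ⊢
        refine ⟨?_, h1.2⟩
        simp only [Finset.coe_erase, Set.mem_diff, Set.mem_singleton_iff]
        exact ⟨h1.1, fun hee => hic_notin (hee ▸ he)⟩
      have hrcj : (Gr (S.erase s(i, c))).Reachable c j := ⟨q.transfer _ hq'⟩
      have hric : (Gr (S.erase s(i, c))).Reachable i c := hr.trans hrcj.symm
      exact acy_iff.mp hacy i c (Gr_adj.mp hadj).1 (Gr_adj.mp hadj).2 hric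
    · intro hr
      have hne : s(i, c) ≠ f := fun h => hic_notin (h ▸ hfq)
      have hmem : s(i, c) ∈ S.erase f := Finset.mem_erase.mpr ⟨hne, (Gr_adj.mp hadj).1⟩
      have hric : (Gr (S.erase f)).Reachable i c :=
        ((Gr_adj.mpr ⟨hmem, (Gr_adj.mp hadj).2⟩) : (Gr (S.erase f)).Adj i c).reachable
      exact IH hp.1 hfq (hric.symm.trans hr)

lemma tree_card [Fintype V] {S : Finset (Sym2 V)} (hnd : ∀ e ∈ S, ¬ e.IsDiag)
    (ht : (Gr S).IsTree) : S.card = Fintype.card V - 1 := by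
  classical
  have hes : (Gr S).edgeSet = ↑S := Gr_edgeSet hnd
  haveI : Fintype (Gr S).edgeSet := Fintype.ofFinset S (by simp [hes])
  have hef : (Gr S).edgeFinset = S := by
    ext e
    simp [SimpleGraph.edgeFinset, hes]
  have := ht.card_edgeFinset
  rw [hef] at this
  omega

lemma ext_tree [Fintype V] [Nonempty V] {A : Finset (Sym2 V)} (hnd : ∀ e ∈ A, ¬ e.IsDiag)
    (hacy : (Gr A).IsAcyclic) :
    ∃ S : Finset (Sym2 V), A ⊆ S ∧ (∀ e ∈ S, ¬ e.IsDiag) ∧ (Gr S).IsTree ∧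
      S.card = Fintype.card V - 1 := by
  classical
  let P : Finset (Sym2 V) → Prop := fun S => A ⊆ S ∧ (∀ e ∈ S, ¬ e.IsDiag) ∧ (Gr S).IsAcyclic
  have hPA : P A := ⟨Finset.Subset.refl _, hnd, hacy⟩
  obtain ⟨S, hSmem, hSmax⟩ := Finset.exists_max_image (Finset.univ.filter P) Finset.card
    ⟨A, Finset.mem_filter.mpr ⟨Finset.mem_univ _, hPA⟩⟩
  obtain ⟨hAS, hSnd, hSacy⟩ := Finset.mem_filter.mp hSmem |>.2
  have hconn : (Gr S).Connected := by
    rw [SimpleGraph.connected_iff]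
    refine ⟨fun u v => ?_, inferInstance⟩
    by_contra hnr
    have huv : u ≠ v := fun h => hnr (h ▸ SimpleGraph.Reachable.refl u)
    have hns : s(u, v) ∉ S := fun h => hnr ((Gr_adj.mpr ⟨h, huv⟩) : (Gr S).Adj u v).reachable
    have hP' : P (insert s(u, v) S) := by
      refine ⟨hAS.trans (Finset.subset_insert _ _), ?_, acy_insert hSacy huv hnr⟩
      intro e he
      rcases Finset.mem_insert.mp he with rfl | h
      · simpa using huv
      · exact hSnd e h
    have := hSmax _ (Finset.mem_filter.mpr ⟨Finset.mem_univ _, hP'⟩)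
    rw [Finset.card_insert_of_notMem hns] at this
    omega
  exact ⟨S, hAS, hSnd, ⟨hconn, hSacy⟩, tree_card hSnd ⟨hconn, hSacy⟩⟩

lemma spanning_isTree [Fintype V] [Nonempty V] {S : Finset (Sym2 V)}
    (hnd : ∀ e ∈ S, ¬ e.IsDiag) (hcard : S.card = Fintype.card V - 1)
    (hacy : (Gr S).IsAcyclic) : (Gr S).IsTree := by
  obtain ⟨S', hsub, _, ht, hcard'⟩ := ext_tree hnd hacy
  have : S = S' := Finset.eq_of_subset_of_card_le hsub (by omega)
  rwa [this]

lemma ub {δ : V → V → ℝ} (hs : ∀ a b, δ a b = δ b a)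
    (hu : ∀ x y z : V, x ≠ y → x ≠ z → y ≠ z →
      ((δ x y = δ x z ∧ δ y z ≤ δ x y) ∨ (δ x y = δ y z ∧ δ x z ≤ δ x y) ∨
        (δ x z = δ y z ∧ δ x y ≤ δ x z)))
    {G : SimpleGraph V} {i j : V} (p : G.Walk i j) :
    i ≠ j → ∃ e ∈ p.edges, δ i j ≤ Sym2.lift ⟨δ, hs⟩ e := by
  induction p with
  | nil => intro hij; exact absurd rfl hij
  | @cons a c b hadj q IH =>
    intro hab
    by_cases hcb : c = b
    · subst hcb
      exact ⟨s(a, c), by simp, by simp⟩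
    · have hac : a ≠ c := hadj.ne
      obtain ⟨e, he, hle⟩ := IH hcb
      rcases hu a b c hab hac (fun hbc => hcb hbc.symm) with ⟨h1, _⟩ | ⟨h1, _⟩ | ⟨_, h1⟩
      · exact ⟨s(a, c), by simp, by simp [h1.le]⟩
      · refine ⟨e, by simp [he], ?_⟩
        rw [h1, hs b c]
        exact hle
      · exact ⟨s(a, c), by simp, by simp [h1]⟩

end MSTAux



/-- A spanning tree of the complete graph on `Fin n`: an `(n-1)`-element set of
2-element subsets (non-diagonal unordered pairs) containing no cycle. -/
def IsSpanningTree (n : ℕ) (T : Finset (Sym2 (Fin n))) : Prop :=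
  (∀ e ∈ T, ¬ e.IsDiag) ∧ T.card = n - 1 ∧
    (SimpleGraph.fromEdgeSet (↑T : Set (Sym2 (Fin n)))).IsAcyclic

/-- A dissimilarity map `δ` on `[n]` (`n ≥ 2`) is an ultrametric if and only if every
2-element subset `{i,j}` of `[n]` is contained in some `δ`-minimum spanning tree of the
complete graph on `[n]`. -/

theorem stmt3 (n : ℕ) (hn : 2 ≤ n) (δ : Fin n → Fin n → ℝ) (hδ : IsDissim δ) :
    IsUltra δ ↔
      ∀ i j : Fin n, i ≠ j →
        ∃ T : Finset (Sym2 (Fin n)), IsSpanningTree n T ∧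
          (∀ T' : Finset (Sym2 (Fin n)), IsSpanningTree n T' →
            ∑ e ∈ T, Sym2.lift ⟨δ, hδ.2⟩ e ≤ ∑ e ∈ T', Sym2.lift ⟨δ, hδ.2⟩ e) ∧
          s(i, j) ∈ T := by
  classical
  haveI : Nonempty (Fin n) := ⟨⟨0, by omega⟩⟩
  have hcardV : Fintype.card (Fin n) = n := Fintype.card_fin n
  set W : Sym2 (Fin n) → ℝ := Sym2.lift ⟨δ, hδ.2⟩ with hW
  have hWmk : ∀ a b : Fin n, W s(a, b) = δ a b := fun a b => by simp [hW]
  have hspan : ∀ T : Finset (Sym2 (Fin n)), IsSpanningTree n T ↔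
      ((∀ e ∈ T, ¬ e.IsDiag) ∧ T.card = n - 1 ∧ (MSTAux.Gr T).IsAcyclic) := fun T => Iff.rfl
  constructor
  · -- forward: ultrametric implies every edge in some MST
    intro hu i j hij
    have hexists : ∃ T, IsSpanningTree n T := by
      obtain ⟨S, _, hnd, ht, hcard⟩ := MSTAux.ext_tree (A := (∅ : Finset (Sym2 (Fin n))))
        (by simp) (by simp [MSTAux.Gr])
      exact ⟨S, hnd, by rw [hcard, hcardV], ht.IsAcyclic⟩
    obtain ⟨T, hTmem, hTmin⟩ := Finset.exists_min_image
      (Finset.univ.filter (fun T => IsSpanningTree n T)) (fun T => ∑ e ∈ T, W e)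
      (by obtain ⟨T, hT⟩ := hexists; exact ⟨T, by simp [hT]⟩)
    have hT : IsSpanningTree n T := (Finset.mem_filter.mp hTmem).2
    have hTmin' : ∀ T', IsSpanningTree n T' → ∑ e ∈ T, W e ≤ ∑ e ∈ T', W e :=
      fun T' h => hTmin T' (by simp [h])
    by_cases hmem : s(i, j) ∈ T
    · exact ⟨T, hT, hTmin', hmem⟩
    obtain ⟨hnd, hcard, hacy⟩ := hT
    have htree : (MSTAux.Gr T).IsTree :=
      MSTAux.spanning_isTree hnd (by rw [hcardV]; exact hcard) hacy
    obtain ⟨w⟩ := htree.isConnected.preconnected i j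
    obtain ⟨f, hfp, hfle⟩ := MSTAux.ub hδ.2 hu.2 (w.toPath : (MSTAux.Gr T).Walk i j) hij
    have hfT : f ∈ T := by
      have := SimpleGraph.Walk.edges_subset_edgeSet _ hfp
      rwa [MSTAux.Gr_edgeSet hnd, Finset.mem_coe] at this
    have hnotin : s(i, j) ∉ T.erase f := fun h => hmem (Finset.mem_of_mem_erase h)
    have hnr : ¬ (MSTAux.Gr (T.erase f)).Reachable i j :=
      MSTAux.pathsplit hacy _ w.toPath.2 hfp
    have hacy' : (MSTAux.Gr (T.erase f)).IsAcyclic :=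
      MSTAux.acy_anti (Finset.erase_subset _ _) hacy
    set T' := insert s(i, j) (T.erase f) with hT'def
    have hT' : IsSpanningTree n T' := by
      refine ⟨?_, ?_, MSTAux.acy_insert hacy' hij hnr⟩
      · intro e he
        rcases Finset.mem_insert.mp he with rfl | h
        · simpa using hij
        · exact hnd e (Finset.mem_of_mem_erase h)
      · rw [Finset.card_insert_of_notMem hnotin, Finset.card_erase_of_mem hfT, hcard]
        omega
    have hsum : ∑ e ∈ T', W e ≤ ∑ e ∈ T, W e := by
      rw [hT'def, Finset.sum_insert hnotin]
      have h2 := Finset.sum_erase_add T W hfT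
      have h3 : W s(i, j) ≤ W f := by rw [hWmk]; exact hfle
      linarith
    exact ⟨T', hT', fun T'' h => hsum.trans (hTmin' T'' h), Finset.mem_insert_self _ _⟩
  · -- backward
    intro h
    refine ⟨hδ, ?_⟩
    have key : ∀ x y z : Fin n, x ≠ y → x ≠ z → y ≠ z →
        δ x z < δ x y → δ y z < δ x y → False := by
      intro x y z hxy hxz hyz h1 h2
      obtain ⟨T, ⟨hnd, hcard, hacy⟩, hmin, hmem⟩ := h x y hxy
      have htree : (MSTAux.Gr T).IsTree :=
        MSTAux.spanning_isTree hnd (by rw [hcardV]; exact hcard) hacy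
      set E := T.erase s(x, y) with hEdef
      have hbridge : ¬ (MSTAux.Gr E).Reachable x y := MSTAux.acy_iff.mp hacy x y hmem hxy
      have hacyE : (MSTAux.Gr E).IsAcyclic := MSTAux.acy_anti (Finset.erase_subset _ _) hacy
      have hsumE : ∑ e ∈ E, W e + δ x y = ∑ e ∈ T, W e := by
        rw [← hWmk x y]; exact Finset.sum_erase_add T W hmem
      have hcases := MSTAux.reach_erase_cases hxy hmem (htree.isConnected.preconnected z x)
      have main : ∀ a b : Fin n, a ≠ b → b ≠ z → s(a, b) ∈ T → E = T.erase s(a, b) →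
          δ b z < δ x y → ¬ (MSTAux.Gr E).Reachable a b → (MSTAux.Gr E).Reachable z a → False := by
        intro a b hab hbz habT hE hwlt hbr hza
        have hbz' : b ≠ z := hbz
        have hnrE : ¬ (MSTAux.Gr E).Reachable b z := fun hr => hbr ((hr.trans hza).symm)
        have hfE : s(b, z) ∉ E := fun hm =>
          hnrE ((MSTAux.Gr_adj.mpr ⟨hm, hbz'⟩) : (MSTAux.Gr E).Adj b z).reachable
        set T2 := insert s(b, z) E with hT2def
        have hT2 : IsSpanningTree n T2 := by
          refine ⟨?_, ?_, MSTAux.acy_insert hacyE hbz' hnrE⟩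
          · intro e he
            rcases Finset.mem_insert.mp he with rfl | hm
            · simpa using hbz'
            · exact hnd e (Finset.mem_of_mem_erase (hE ▸ hm))
          · rw [hT2def, Finset.card_insert_of_notMem hfE, hE,
              Finset.card_erase_of_mem habT, hcard]
            omega
        have hsum2 : ∑ e ∈ T2, W e = δ b z + ∑ e ∈ E, W e := by
          rw [hT2def, Finset.sum_insert hfE, hWmk]
        have := hmin T2 hT2
        rw [hW] at this
        rw [hsum2] at this
        linarith
      rcases hcases with hzx | hzy
      · exact main x y hxy hyz hmem rfl h2 hbridge hzx
      · have hEyx : E = T.erase s(y, x) := by rw [hEdef, Sym2.eq_swap]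
        have hmem' : s(y, x) ∈ T := by rwa [Sym2.eq_swap]
        exact main y x (Ne.symm hxy) hxz hmem' hEyx h1 (fun hr => hbridge hr.symm) hzy
    intro x y z hxy hxz hyz
    by_contra hcon
    push_neg at hcon
    obtain ⟨hc1, hc2, hc3⟩ := hcon
    have hsym := hδ.2
    rcases lt_trichotomy (δ x y) (δ x z) with hlt | heq | hgt
    · rcases lt_trichotomy (δ x z) (δ y z) with hlt2 | heq2 | hgt2
      · exact key y z x (hyz) (Ne.symm hxy) (Ne.symm hxz)
          (by rw [hsym y x]; linarith) (by rw [hsym z x]; linarith)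
      · linarith [hc3 heq2]
      · exact key x z y hxz hxy (Ne.symm hyz) hlt (by rw [hsym z y]; linarith)
    · have hbig := hc1 heq
      exact key y z x hyz (Ne.symm hxy) (Ne.symm hxz)
        (by rw [hsym y x]; linarith) (by rw [hsym z x]; linarith)
    · rcases lt_trichotomy (δ x y) (δ y z) with hlt2 | heq2 | hgt2
      · exact key y z x hyz (Ne.symm hxy) (Ne.symm hxz)
          (by rw [hsym y x]; linarith) (by rw [hsym z x]; linarith)
      · linarith [hc2 heq2]
      · exact key x y z hxy hxz hyz hgt hgt2
end

section
/- Let M be a loopless matroid on a finite ground set, and let F and G be flats of M such that the restrictions M|F and M|G are connected matroids and F ∩ G ≠ ∅. Then the restriction of M to the closure of F ∪ G is a connected matroid. -/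
open Set

variable {α : Type*}

/-- A circuit of `M`: a dependent subset of the ground set all of whose proper
subsets are independent. -/
def MCircuit (M : Matroid α) (C : Set α) : Prop :=
  C ⊆ M.E ∧ ¬ M.Indep C ∧ ∀ D : Set α, D ⊂ C → M.Indep D

/-- A matroid is connected if its ground set is nonempty and any two distinct
elements of the ground set lie in a common circuit. -/
def MConnected (M : Matroid α) : Prop :=
  M.E.Nonempty ∧ ∀ a ∈ M.E, ∀ b ∈ M.E, a ≠ b → ∃ C, MCircuit M C ∧ a ∈ C ∧ b ∈ C

namespace MCAux

variable {M : Matroid α}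

lemma mc_diff_indep {C : Set α} (hC : MCircuit M C) {x : α} (hx : x ∈ C) :
    M.Indep (C \ {x}) :=
  hC.2.2 _ (Set.sdiff_singleton_ssubset.mpr hx)

/-- a circuit that misses a point of another circuit has a point outside it. -/
lemma mc_exists_outside {C C' : Set α} (hC : MCircuit M C) (hC' : MCircuit M C')
    {x : α} (hx : x ∈ C) (hx' : x ∉ C') : ∃ y, y ∈ C' ∧ y ∉ C := by
  by_contra h
  push_neg at h
  have hss : C' ⊆ C \ {x} := fun y hy => ⟨h y hy, fun (he : y = x) => hx' (he ▸ hy)⟩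
  exact hC'.2.1 ((mc_diff_indep hC hx).subset hss)

/-- every dependent subset of the ground set contains a circuit. -/
lemma exists_mc_aux (hfin : M.E.Finite) :
    ∀ n (D : Set α), D.ncard ≤ n → D ⊆ M.E → ¬ M.Indep D → ∃ C, C ⊆ D ∧ MCircuit M C := by
  intro n
  induction n with
  | zero =>
    intro D hcard hDE hdep
    have hDfin : D.Finite := hfin.subset hDE
    have : D = ∅ := (Set.ncard_eq_zero hDfin).mp (Nat.le_zero.mp hcard)
    exact absurd (this ▸ M.empty_indep) hdep
  | succ n ih =>
    intro D hcard hDE hdep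
    by_cases h : ∀ D' : Set α, D' ⊂ D → M.Indep D'
    · exact ⟨D, Subset.rfl, hDE, hdep, h⟩
    push_neg at h
    obtain ⟨D', hsub, hdep'⟩ := h
    have hlt : D'.ncard < D.ncard := Set.ncard_lt_ncard hsub (hfin.subset hDE)
    obtain ⟨C, hCD, hC⟩ := ih D' (by omega) (hsub.subset.trans hDE) hdep'
    exact ⟨C, hCD.trans hsub.subset, hC⟩

lemma exists_mc (hfin : M.E.Finite) {D : Set α} (hDE : D ⊆ M.E) (hdep : ¬ M.Indep D) :
    ∃ C, C ⊆ D ∧ MCircuit M C :=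
  exists_mc_aux hfin D.ncard D le_rfl hDE hdep

/-- weak circuit elimination. -/
lemma weak_elim (hfin : M.E.Finite) {C₁ C₂ : Set α} {e : α} (h₁ : MCircuit M C₁)
    (h₂ : MCircuit M C₂) (hne : C₁ ≠ C₂) (he₁ : e ∈ C₁) (he₂ : e ∈ C₂) :
    ¬ M.Indep ((C₁ ∪ C₂) \ {e}) := by
  intro hind
  have hXE : C₁ ∪ C₂ ⊆ M.E := union_subset h₁.1 h₂.1
  have hXfin : (C₁ ∪ C₂).Finite := hfin.subset hXE
  have hf : ∃ f, f ∈ C₁ ∧ f ∉ C₂ := by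
    by_contra h
    push_neg at h
    exact h₁.2.1 (h₂.2.2 _ (ssubset_of_subset_of_ne h hne))
  obtain ⟨f, hf₁, hf₂⟩ := hf
  obtain ⟨J, hJ, hIJ⟩ := (mc_diff_indep h₁ hf₁).subset_isBasis_of_subset
    (diff_subset.trans subset_union_left) hXE
  have hfJ : f ∉ J := by
    intro hfJ
    refine h₁.2.1 (hJ.indep.subset fun y hy => ?_)
    rcases eq_or_ne y f with rfl | hyf
    · exact hfJ
    · exact hIJ ⟨hy, hyf⟩
  have hg : ∃ g, g ∈ C₂ ∧ g ∉ J := by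
    by_contra h
    push_neg at h
    exact h₂.2.1 (hJ.indep.subset h)
  obtain ⟨g, hg₂, hgJ⟩ := hg
  have hgf : g ≠ f := fun h => hf₂ (h ▸ hg₂)
  have hbasis : M.IsBasis ((C₁ ∪ C₂) \ {e}) (C₁ ∪ C₂) := by
    obtain ⟨J', hJ', hsub⟩ := hind.subset_isBasis_of_subset diff_subset hXE
    have heJ' : e ∉ J' := by
      intro heJ'
      have hJX : J' = C₁ ∪ C₂ := by
        refine hJ'.subset.antisymm ?_
        intro y hy
        rcases eq_or_ne y e with rfl | hye
        · exact heJ'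
        · exact hsub (Set.mem_diff_singleton.mpr ⟨hy, hye⟩)
      exact h₁.2.1 (hJ'.indep.subset (hJX ▸ subset_union_left))
    have hJ'eq : J' = (C₁ ∪ C₂) \ {e} := by
      refine subset_antisymm ?_ hsub
      intro y hy
      exact Set.mem_diff_singleton.mpr ⟨hJ'.subset hy, fun h => heJ' (h ▸ hy)⟩
    exact hJ'eq ▸ hJ'
  have hcard := hJ.encard_eq_encard hbasis
  have hJne : J.ncard = ((C₁ ∪ C₂) \ {e}).ncard := by
    simp only [Set.ncard_def, hcard]
  have hJsub : J ⊆ ((C₁ ∪ C₂) \ {f}) \ {g} := fun y hy =>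
    ⟨⟨hJ.subset hy, fun (h : y = f) => hfJ (h ▸ hy)⟩, fun (h : y = g) => hgJ (h ▸ hy)⟩
  have h1 : ((C₁ ∪ C₂) \ {e}).ncard + 1 = (C₁ ∪ C₂).ncard :=
    Set.ncard_diff_singleton_add_one (Or.inl he₁) hXfin
  have h2 : (((C₁ ∪ C₂) \ {f}) \ {g}).ncard + 1 = ((C₁ ∪ C₂) \ {f}).ncard :=
    Set.ncard_diff_singleton_add_one ⟨Or.inr hg₂, hgf⟩ (hXfin.subset diff_subset)
  have h3 : ((C₁ ∪ C₂) \ {f}).ncard + 1 = (C₁ ∪ C₂).ncard :=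
    Set.ncard_diff_singleton_add_one (Or.inl hf₁) hXfin
  have h4 : J.ncard ≤ (((C₁ ∪ C₂) \ {f}) \ {g}).ncard :=
    Set.ncard_le_ncard hJsub ((hXfin.subset diff_subset).subset diff_subset)
  omega

/-- strong circuit elimination, auxiliary induction on the size of the union. -/
lemma strong_elim_aux (hfin : M.E.Finite) :
    ∀ n (C₁ C₂ : Set α) (e f : α), (C₁ ∪ C₂).ncard ≤ n → MCircuit M C₁ → MCircuit M C₂ →
      e ∈ C₁ → e ∈ C₂ → f ∈ C₁ → f ∉ C₂ →
      ∃ C, MCircuit M C ∧ f ∈ C ∧ C ⊆ (C₁ ∪ C₂) \ {e} := by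
  intro n
  induction n with
  | zero =>
    intro C₁ C₂ e f hcard h₁ h₂ he₁ he₂ hf₁ hf₂
    have hemp : (C₁ ∪ C₂) = ∅ :=
      (Set.ncard_eq_zero (hfin.subset (union_subset h₁.1 h₂.1))).mp (Nat.le_zero.mp hcard)
    have he' : e ∈ C₁ ∪ C₂ := Or.inl he₁
    rw [hemp] at he'
    exact absurd he' (Set.notMem_empty e)
  | succ n ih =>
    intro C₁ C₂ e f hcard h₁ h₂ he₁ he₂ hf₁ hf₂
    have hXE : C₁ ∪ C₂ ⊆ M.E := union_subset h₁.1 h₂.1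
    have hXfin : (C₁ ∪ C₂).Finite := hfin.subset hXE
    have hne : C₁ ≠ C₂ := fun h => hf₂ (h ▸ hf₁)
    have hdep := weak_elim hfin h₁ h₂ hne he₁ he₂
    obtain ⟨C₃, hC₃sub, hC₃⟩ := exists_mc hfin (diff_subset.trans hXE) hdep
    by_cases hfC₃ : f ∈ C₃
    · exact ⟨C₃, hC₃, hfC₃, hC₃sub⟩
    have heC₃ : e ∉ C₃ := fun h => (hC₃sub h).2 rfl
    obtain ⟨g, hgC₃, hgC₁⟩ := mc_exists_outside h₁ hC₃ he₁ heC₃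
    have hgC₂ : g ∈ C₂ := ((hC₃sub hgC₃).1).resolve_left hgC₁
    -- first application of the inductive hypothesis, to C₂ and C₃ at g, keeping e
    have hcard₁ : (C₂ ∪ C₃).ncard ≤ n := by
      have hss : C₂ ∪ C₃ ⊂ C₁ ∪ C₂ := by
        refine ⟨union_subset subset_union_right (hC₃sub.trans diff_subset), fun hcon => ?_⟩
        have : f ∈ C₂ ∪ C₃ := hcon (Or.inl hf₁)
        exact this.elim hf₂ hfC₃
      have := Set.ncard_lt_ncard hss hXfin
      omega
    obtain ⟨C₄, hC₄, heC₄, hC₄sub⟩ := ih C₂ C₃ g e hcard₁ h₂ hC₃ hgC₂ hgC₃ he₂ heC₃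
    have hC₄X : C₄ ⊆ C₁ ∪ C₂ := hC₄sub.trans
      (diff_subset.trans (union_subset subset_union_right (hC₃sub.trans diff_subset)))
    have hfC₄ : f ∉ C₄ := fun h => ((hC₄sub h).1).elim hf₂ hfC₃
    have hgC₄ : g ∉ C₄ := fun h => (hC₄sub h).2 rfl
    -- second application, to C₁ and C₄ at e, keeping f
    have hcard₂ : (C₁ ∪ C₄).ncard ≤ n := by
      have hss : C₁ ∪ C₄ ⊂ C₁ ∪ C₂ := by
        refine ⟨union_subset subset_union_left hC₄X, fun hcon => ?_⟩
        have : g ∈ C₁ ∪ C₄ := hcon (Or.inr hgC₂)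
        exact this.elim hgC₁ hgC₄
      have := Set.ncard_lt_ncard hss hXfin
      omega
    obtain ⟨C₅, hC₅, hfC₅, hC₅sub⟩ := ih C₁ C₄ e f hcard₂ h₁ hC₄ he₁ heC₄ hf₁ hfC₄
    exact ⟨C₅, hC₅, hfC₅, hC₅sub.trans
      (diff_subset_diff_left (union_subset subset_union_left hC₄X))⟩

/-- strong circuit elimination. -/
lemma strong_elim (hfin : M.E.Finite) {C₁ C₂ : Set α} {e f : α} (h₁ : MCircuit M C₁)
    (h₂ : MCircuit M C₂) (he₁ : e ∈ C₁) (he₂ : e ∈ C₂) (hf₁ : f ∈ C₁) (hf₂ : f ∉ C₂) :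
    ∃ C, MCircuit M C ∧ f ∈ C ∧ C ⊆ (C₁ ∪ C₂) \ {e} :=
  strong_elim_aux hfin (C₁ ∪ C₂).ncard C₁ C₂ e f le_rfl h₁ h₂ he₁ he₂ hf₁ hf₂

/-- if two circuits intersect, any element of the first and any element of the second
lie in a common circuit inside their union. -/
lemma common_circuit (hfin : M.E.Finite) {C₁ C₂ : Set α} {e g : α} (h₁ : MCircuit M C₁)
    (h₂ : MCircuit M C₂) (he : e ∈ C₁) (hg : g ∈ C₂) (hint : (C₁ ∩ C₂).Nonempty)
    (hne : e ≠ g) : ∃ C, MCircuit M C ∧ e ∈ C ∧ g ∈ C ∧ C ⊆ C₁ ∪ C₂ := by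
  by_cases he₂ : e ∈ C₂
  · exact ⟨C₂, h₂, he₂, hg, subset_union_right⟩
  -- auxiliary induction on the number of elements of C₃ outside C₂
  suffices haux : ∀ n (C₃ : Set α), (C₃ \ C₂).ncard ≤ n → MCircuit M C₃ → e ∈ C₃ →
      C₃ ⊆ C₁ ∪ C₂ → (C₃ ∩ C₂).Nonempty →
      ∃ C, MCircuit M C ∧ e ∈ C ∧ g ∈ C ∧ C ⊆ C₁ ∪ C₂ by
    exact haux (C₁ \ C₂).ncard C₁ le_rfl h₁ he subset_union_left hint
  intro n
  induction n with
  | zero =>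
    intro C₃ hcard hC₃ heC₃ hC₃X hint₃
    have hfin₃ : (C₃ \ C₂).Finite := hfin.subset (diff_subset.trans hC₃.1)
    have hempty : C₃ \ C₂ = ∅ := (Set.ncard_eq_zero hfin₃).mp (Nat.le_zero.mp hcard)
    by_contra h'
    have hmem : e ∈ C₃ \ C₂ := ⟨heC₃, he₂⟩
    rw [hempty] at hmem
    exact absurd hmem (Set.notMem_empty e)
  | succ n ih =>
    intro C₃ hcard hC₃ heC₃ hC₃X hint₃
    by_cases hgC₃ : g ∈ C₃
    · exact ⟨C₃, hC₃, heC₃, hgC₃, hC₃X⟩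
    obtain ⟨h, hhC₃, hhC₂⟩ := hint₃
    -- eliminate h from C₂ ∪ C₃ keeping g
    obtain ⟨C₄, hC₄, hgC₄, hC₄sub⟩ := strong_elim hfin h₂ hC₃ hhC₂ hhC₃ hg hgC₃
    have hC₄X : C₄ ⊆ C₁ ∪ C₂ :=
      hC₄sub.trans (diff_subset.trans (union_subset subset_union_right hC₃X))
    by_cases heC₄ : e ∈ C₄
    · exact ⟨C₄, hC₄, heC₄, hgC₄, hC₄X⟩
    have hhC₄ : h ∉ C₄ := fun hh => (hC₄sub hh).2 rfl
    -- C₄ has a point outside C₂, which lies in C₃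
    obtain ⟨k, hkC₄, hkC₂⟩ := mc_exists_outside h₂ hC₄ hhC₂ hhC₄
    have hkC₃ : k ∈ C₃ := ((hC₄sub hkC₄).1).resolve_left hkC₂
    -- eliminate k from C₃ ∪ C₄ keeping e
    obtain ⟨C₅, hC₅, heC₅, hC₅sub⟩ := strong_elim hfin hC₃ hC₄ hkC₃ hkC₄ heC₃ heC₄
    have hC₅X : C₅ ⊆ C₁ ∪ C₂ :=
      hC₅sub.trans (diff_subset.trans (union_subset hC₃X hC₄X))
    by_cases hgC₅ : g ∈ C₅
    · exact ⟨C₅, hC₅, heC₅, hgC₅, hC₅X⟩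
    -- C₅ \ C₂ shrinks strictly
    have hC₄diff : C₄ \ C₂ ⊆ C₃ := fun y hy => ((hC₄sub hy.1).1).resolve_left hy.2
    have hC₅diff : C₅ \ C₂ ⊆ (C₃ \ C₂) \ {k} := by
      intro y hy
      have hy₅ := hC₅sub hy.1
      have hyC₃ : y ∈ C₃ := by
        rcases hy₅.1 with h' | h'
        · exact h'
        · rcases (hC₄sub h').1 with h'' | h''
          · exact absurd h'' hy.2
          · exact h''
      exact ⟨⟨hyC₃, hy.2⟩, hy₅.2⟩
    have hint₅ : (C₅ ∩ C₂).Nonempty := by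
      by_contra hcon
      rw [Set.not_nonempty_iff_eq_empty] at hcon
      have hsub' : C₅ ⊆ C₃ \ {k} := by
        intro y hy
        have hyC₂ : y ∉ C₂ := fun h' => (Set.eq_empty_iff_forall_notMem.mp hcon y) ⟨hy, h'⟩
        have := hC₅diff ⟨hy, hyC₂⟩
        exact ⟨this.1.1, this.2⟩
      exact hC₅.2.1 ((mc_diff_indep hC₃ hkC₃).subset hsub')
    have hcard₅ : (C₅ \ C₂).ncard ≤ n := by
      have hss : C₅ \ C₂ ⊂ C₃ \ C₂ := by
        refine ⟨fun y hy => (hC₅diff hy).1, fun hcon => ?_⟩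
        have : k ∈ C₅ \ C₂ := hcon ⟨hkC₃, hkC₂⟩
        exact (hC₅diff this).2 rfl
      have := Set.ncard_lt_ncard hss (hfin.subset (diff_subset.trans hC₃.1))
      omega
    exact ih C₅ hcard₅ hC₅ heC₅ hC₅X hint₅

/-- circuits of a restriction. -/
lemma mc_restrict_iff {R : Set α} (hR : R ⊆ M.E) {C : Set α} :
    MCircuit (M.restrict R) C ↔ MCircuit M C ∧ C ⊆ R := by
  constructor
  · rintro ⟨hCE, hdep, hmin⟩
    rw [Matroid.restrict_ground_eq] at hCE
    refine ⟨⟨hCE.trans hR, fun hind => hdep ?_, fun D hD => ?_⟩, hCE⟩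
    · rw [Matroid.restrict_indep_iff]; exact ⟨hind, hCE⟩
    · exact (Matroid.restrict_indep_iff.mp (hmin D hD)).1
  · rintro ⟨⟨hCE, hdep, hmin⟩, hCR⟩
    refine ⟨by rwa [Matroid.restrict_ground_eq], fun hind => hdep ?_, fun D hD => ?_⟩
    · exact (Matroid.restrict_indep_iff.mp hind).1
    · rw [Matroid.restrict_indep_iff]
      exact ⟨hmin D hD, hD.subset.trans hCR⟩

end MCAux

open MCAux

/-- If `F` and `G` are flats of a loopless matroid `M` (finite ground set) whose
restrictions are connected and `F ∩ G ≠ ∅`, then the restriction of `M` to the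
closure of `F ∪ G` is connected. -/
theorem stmt4 (M : Matroid α) (hfin : M.E.Finite) (hloop : ∀ e ∈ M.E, M.Indep {e})
    (F G : Set α) (hF : M.IsFlat F) (hG : M.IsFlat G)
    (hFc : MConnected (M.restrict F)) (hGc : MConnected (M.restrict G))
    (hFG : (F ∩ G).Nonempty) :
    MConnected (M.restrict (M.closure (F ∪ G))) := by
  obtain ⟨p, hpF, hpG⟩ := hFG
  set R := M.closure (F ∪ G) with hR
  have hFE : F ⊆ M.E := hF.subset_ground
  have hGE : G ⊆ M.E := hG.subset_ground
  have hFGE : F ∪ G ⊆ M.E := union_subset hFE hGE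
  have hRE : R ⊆ M.E := M.closure_subset_ground _
  have hFGR : F ∪ G ⊆ R := M.subset_closure _ hFGE
  have hpR : p ∈ R := hFGR (Or.inl hpF)
  -- circuits inside F or G through x and p
  have linkF : ∀ x ∈ F, x ≠ p → ∃ C, MCircuit M C ∧ x ∈ C ∧ p ∈ C ∧ C ⊆ R := by
    intro x hx hxp
    obtain ⟨C, hC, hxC, hpC⟩ := hFc.2 x (by simpa using hx) p (by simpa using hpF) hxp
    obtain ⟨hC', hCF⟩ := (mc_restrict_iff hFE).mp hC
    exact ⟨C, hC', hxC, hpC, hCF.trans (subset_union_left.trans hFGR)⟩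
  have linkG : ∀ x ∈ G, x ≠ p → ∃ C, MCircuit M C ∧ x ∈ C ∧ p ∈ C ∧ C ⊆ R := by
    intro x hx hxp
    obtain ⟨C, hC, hxC, hpC⟩ := hGc.2 x (by simpa using hx) p (by simpa using hpG) hxp
    obtain ⟨hC', hCG⟩ := (mc_restrict_iff hGE).mp hC
    exact ⟨C, hC', hxC, hpC, hCG.trans (subset_union_right.trans hFGR)⟩
  have linkFG : ∀ x ∈ F ∪ G, x ≠ p → ∃ C, MCircuit M C ∧ x ∈ C ∧ p ∈ C ∧ C ⊆ R := by
    intro x hx hxp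
    exact hx.elim (fun h => linkF x h hxp) (fun h => linkG x h hxp)
  -- every element of R is linked to p
  have key : ∀ x ∈ R, x ≠ p → ∃ C, MCircuit M C ∧ x ∈ C ∧ p ∈ C ∧ C ⊆ R := by
    intro x hx hxp
    by_cases hxFG : x ∈ F ∪ G
    · exact linkFG x hxFG hxp
    -- x is in the closure but not in F ∪ G
    obtain ⟨I, hI⟩ := M.exists_isBasis (F ∪ G) hFGE
    have hxI : x ∉ I := fun h => hxFG (hI.subset h)
    have hxcl : x ∈ M.closure I := by
      rw [hI.closure_eq_closure]; exact hx
    have hxE : x ∈ M.E := hRE hx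
    have hdep : ¬ M.Indep (insert x I) := by
      rw [hI.indep.insert_indep_iff_of_notMem hxI]
      exact fun h => h.2 hxcl
    obtain ⟨C, hCsub, hC⟩ := exists_mc hfin
      (insert_subset hxE (hI.indep.subset_ground)) hdep
    have hxC : x ∈ C := by
      by_contra hxC
      exact hC.2.1 (hI.indep.subset fun y hy =>
        ((hCsub hy).elim (fun h => absurd (h ▸ hy) hxC) id))
    have hCR : C ⊆ R := hCsub.trans (insert_subset hx (hI.subset.trans hFGR))
    -- C has a second element, in I
    have hy : ∃ y, y ∈ C ∧ y ≠ x := by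
      by_contra hcon
      push_neg at hcon
      have : C ⊆ {x} := fun y hy => hcon y hy
      have hCx : C = {x} := this.antisymm (by simpa [Set.singleton_subset_iff] using hxC)
      exact hC.2.1 (hCx ▸ hloop x hxE)
    obtain ⟨y, hyC, hyx⟩ := hy
    have hyI : y ∈ I := ((hCsub hyC).resolve_left hyx)
    have hyFG : y ∈ F ∪ G := hI.subset hyI
    rcases eq_or_ne y p with rfl | hyp
    · exact ⟨C, hC, hxC, hyC, hCR⟩
    obtain ⟨Cy, hCy, hyCy, hpCy, hCyR⟩ := linkFG y hyFG hyp
    obtain ⟨C', hC', hxC', hpC', hC'sub⟩ :=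
      common_circuit hfin hC hCy hxC hpCy ⟨y, hyC, hyCy⟩ hxp
    exact ⟨C', hC', hxC', hpC', hC'sub.trans (union_subset hCR hCyR)⟩
  -- assemble connectivity
  constructor
  · rw [Matroid.restrict_ground_eq]
    exact ⟨p, hpR⟩
  intro a ha b hb hab
  rw [Matroid.restrict_ground_eq] at ha hb
  have hmain : ∃ C, MCircuit M C ∧ a ∈ C ∧ b ∈ C ∧ C ⊆ R := by
    rcases eq_or_ne a p with rfl | hap
    · obtain ⟨C, hC, hbC, hpC, hCR⟩ := key b hb (Ne.symm hab)
      exact ⟨C, hC, hpC, hbC, hCR⟩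
    rcases eq_or_ne b p with rfl | hbp
    · obtain ⟨C, hC, haC, hpC, hCR⟩ := key a ha hab
      exact ⟨C, hC, haC, hpC, hCR⟩
    obtain ⟨Ca, hCa, haCa, hpCa, hCaR⟩ := key a ha hap
    obtain ⟨Cb, hCb, hbCb, hpCb, hCbR⟩ := key b hb hbp
    obtain ⟨C, hC, haC, hbC, hCsub⟩ :=
      common_circuit hfin hCa hCb haCa hbCb ⟨p, hpCa, hpCb⟩ hab
    exact ⟨C, hC, haC, hbC, hCsub.trans (union_subset hCaR hCbR)⟩
  obtain ⟨C, hC, haC, hbC, hCR⟩ := hmain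
  exact ⟨C, (mc_restrict_iff hRE).mpr ⟨hC, hCR⟩, haC, hbC⟩
end

section
/- Let M be a loopless matroid on a finite nonempty ground set E and let S be a nested set of M. Then for any F, G ∈ S, either F ⊆ G, or G ⊆ F, or F ∩ G = ∅. -/
variable {α : Type*}

/-- The connected component of `e` in `M`: the equivalence class of `e` under the
relation "lying in a common circuit". -/
def MComponent (M : Matroid α) (e : α) : Set α :=
  {f ∈ M.E | f = e ∨ ∃ C, MCircuit M C ∧ e ∈ C ∧ f ∈ C}

/-- A nested set of `M`: a collection of nonempty connected flats containing every
connected component of `M`, such that the closure of the union of any ≥ 2 pairwise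
incomparable members induces a disconnected restriction. -/
def NestedSet (M : Matroid α) (S : Set (Set α)) : Prop :=
  (∀ F ∈ S, F.Nonempty ∧ M.IsFlat F ∧ MConnected (M.restrict F)) ∧
  (∀ e ∈ M.E, MComponent M e ∈ S) ∧
  (∀ T : Finset (Set α), ↑T ⊆ S → 2 ≤ T.card →
    (∀ F ∈ T, ∀ G ∈ T, F ≠ G → ¬ F ⊆ G ∧ ¬ G ⊆ F) →
    ¬ MConnected (M.restrict (M.closure (⋃ F ∈ T, F))))

open Set

/-- Every finite dependent set contains a circuit. -/
lemma exists_mcircuit_subset {M : Matroid α} :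
    ∀ n (X : Set α), X.ncard ≤ n → X.Finite → X ⊆ M.E → ¬ M.Indep X →
      ∃ C, C ⊆ X ∧ MCircuit M C := by
  intro n
  induction n with
  | zero =>
    intro X hn hXfin hXE hdep
    rw [Nat.le_zero, Set.ncard_eq_zero hXfin] at hn
    exact absurd (hn ▸ M.empty_indep) hdep
  | succ n IH =>
    intro X hn hXfin hXE hdep
    by_cases h : ∀ D, D ⊂ X → M.Indep D
    · exact ⟨X, subset_rfl, hXE, hdep, h⟩
    · push_neg at h
      obtain ⟨D, hDX, hDdep⟩ := h
      have hcard : D.ncard ≤ n := by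
        have := Set.ncard_lt_ncard hDX hXfin; omega
      obtain ⟨C, hCD, hC⟩ := IH D hcard (hXfin.subset hDX.subset)
        (hDX.subset.trans hXE) hDdep
      exact ⟨C, hCD.trans hDX.subset, hC⟩

/-- Every element of a circuit lies in the closure of the rest of the circuit. -/
lemma mcircuit_mem_closure_diff {M : Matroid α} {C : Set α} (hC : MCircuit M C)
    {x : α} (hx : x ∈ C) : x ∈ M.closure (C \ {x}) := by
  have hI : M.Indep (C \ {x}) := hC.2.2 _ (Set.sdiff_singleton_ssubset.mpr hx)
  have hdep : M.Dep (insert x (C \ {x})) := by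
    rw [Set.insert_diff_singleton, Set.insert_eq_self.mpr hx]
    exact ⟨hC.2.1, hC.1⟩
  exact ((hI.insert_dep_iff).mp hdep).1

/-- Fundamental circuit: if `I` is independent, finite and `g ∈ cl(I) \ I`, there is a
circuit through `g` inside `insert g I`. -/
lemma exists_fund_circuit {M : Matroid α} {I : Set α} {g : α} (hIfin : I.Finite)
    (hI : M.Indep I) (hg : g ∈ M.closure I) (hgI : g ∉ I) :
    ∃ C, MCircuit M C ∧ g ∈ C ∧ C ⊆ insert g I := by
  have hdep : M.Dep (insert g I) := hI.insert_dep_iff.mpr ⟨hg, hgI⟩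
  obtain ⟨C, hCsub, hC⟩ := exists_mcircuit_subset (insert g I).ncard _ le_rfl
    (hIfin.insert g) hdep.2 hdep.1
  refine ⟨C, hC, ?_, hCsub⟩
  by_contra hgC
  have : C ⊆ I := fun x hx => ((hCsub hx).resolve_left (fun h => hgC (h ▸ hx)))
  exact hC.2.1 (hI.subset this)

/-- Strong circuit elimination (the form we need). -/
lemma strong_elim {M : Matroid α} (hfin : M.E.Finite) {C1 C2 : Set α} {f g : α}
    (h1 : MCircuit M C1) (h2 : MCircuit M C2) (hf : f ∈ C1) (hg : g ∈ C2)
    (hgC1 : g ∉ C1) (hgf : g ≠ f) :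
    ∃ C3, MCircuit M C3 ∧ g ∈ C3 ∧ C3 ⊆ (C1 ∪ C2) \ {f} := by
  set Z : Set α := (C1 ∪ C2) \ {f, g} with hZ
  have hZE : Z ⊆ M.E := fun x hx => (hx.1.elim (fun h => h1.1 h) (fun h => h2.1 h))
  have hfZ : f ∈ M.closure Z := by
    have h1' : C1 \ {f} ⊆ Z := by
      intro x hx
      exact ⟨Or.inl hx.1, by
        rintro (rfl | rfl)
        · exact hx.2 rfl
        · exact hgC1 hx.1⟩
    exact M.closure_subset_closure h1' (mcircuit_mem_closure_diff h1 hf)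
  have hgZ : g ∈ M.closure Z := by
    have h2' : C2 \ {g} ⊆ insert f Z := by
      intro x hx
      by_cases hxf : x = f
      · exact Or.inl hxf
      · exact Or.inr ⟨Or.inr hx.1, by
          rintro (rfl | rfl)
          · exact hxf rfl
          · exact hx.2 rfl⟩
    have := M.closure_subset_closure h2' (mcircuit_mem_closure_diff h2 hg)
    rwa [Matroid.closure_insert_eq_of_mem_closure hfZ] at this
  obtain ⟨I, hI⟩ := M.exists_isBasis Z hZE
  have hgI : g ∈ M.closure I := by rwa [hI.closure_eq_closure]
  have hgnI : g ∉ I := fun h => (hI.subset h).2 (Or.inr rfl)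
  obtain ⟨C3, hC3, hgC3, hC3sub⟩ :=
    exists_fund_circuit ((hfin.subset hZE).subset hI.subset) hI.indep hgI hgnI
  refine ⟨C3, hC3, hgC3, ?_⟩
  intro x hx
  rcases hC3sub hx with rfl | hxI
  · exact ⟨Or.inr hg, by simpa using hgf⟩
  · exact ⟨(hI.subset hxI).1, fun h => (hI.subset hxI).2 (Or.inl h)⟩

/-- Transitivity workhorse: two circuits that meet give a circuit through any
element of the first and any element of the second. -/
lemma conn_key {M : Matroid α} (hfin : M.E.Finite) :
    ∀ n (C1 C2 : Set α) (a b : α), (C1 ∪ C2).ncard ≤ n →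
      MCircuit M C1 → MCircuit M C2 → (C1 ∩ C2).Nonempty → a ∈ C1 → b ∈ C2 →
      ∃ C, MCircuit M C ∧ a ∈ C ∧ b ∈ C := by
  intro n
  induction n using Nat.strong_induction_on with
  | _ n IH =>
    intro C1 C2 a b hcard h1 h2 hint ha hb
    obtain ⟨f, hf1, hf2⟩ := hint
    have hufin : (C1 ∪ C2).Finite := hfin.subset (union_subset h1.1 h2.1)
    by_cases hbC1 : b ∈ C1
    · exact ⟨C1, h1, ha, hbC1⟩
    by_cases haC2 : a ∈ C2
    · exact ⟨C2, h2, haC2, hb⟩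
    have hbf : b ≠ f := fun h => hbC1 (h ▸ hf1)
    have haf : a ≠ f := fun h => haC2 (h ▸ hf2)
    -- circuit through b avoiding f
    obtain ⟨C3, hC3, hbC3, hC3sub⟩ := strong_elim hfin h1 h2 hf1 hb hbC1 hbf
    by_cases haC3 : a ∈ C3
    · exact ⟨C3, hC3, haC3, hbC3⟩
    have hfC3 : f ∉ C3 := fun h => (hC3sub h).2 rfl
    have hC3ne : ¬ C3 ⊆ C2 := by
      intro h
      exact hC3.2.1 (h2.2.2 C3 ⟨h, fun h' => hfC3 (h' hf2)⟩)
    obtain ⟨x, hxC3, hxC2⟩ := not_subset.mp hC3ne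
    have hxC1 : x ∈ C1 := ((hC3sub hxC3).1.resolve_right hxC2)
    -- pair (C1, C3)
    by_cases hlt : (C1 ∪ C3).ncard < (C1 ∪ C2).ncard
    · exact IH (C1 ∪ C3).ncard (lt_of_lt_of_le hlt hcard) C1 C3 a b le_rfl h1 hC3
        ⟨x, hxC1, hxC3⟩ ha hbC3
    have hsub13 : C1 ∪ C3 ⊆ C1 ∪ C2 := by
      refine union_subset subset_union_left (hC3sub.trans diff_subset)
    have heq13 : C1 ∪ C3 = C1 ∪ C2 :=
      Set.eq_of_subset_of_ncard_le hsub13 (le_of_not_gt hlt) hufin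
    have h21 : C2 \ C1 ⊆ C3 := by
      intro y hy
      have : y ∈ C1 ∪ C3 := heq13 ▸ Or.inr hy.1
      exact this.resolve_left hy.2
    -- circuit through a avoiding f
    obtain ⟨C4, hC4, haC4, hC4sub⟩ := strong_elim hfin h2 h1 hf2 ha haC2 haf
    by_cases hbC4 : b ∈ C4
    · exact ⟨C4, hC4, haC4, hbC4⟩
    have hfC4 : f ∉ C4 := fun h => (hC4sub h).2 rfl
    -- pair (C4, C3)
    rcases (C4 ∩ C3).eq_empty_or_nonempty with hem | hne43
    · -- then C4 ⊆ C1 \ {f}, a proper subset of C1, contradiction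
      have hC4C1 : C4 ⊂ C1 := by
        constructor
        · intro y hy
          have hy' : y ∈ C2 ∪ C1 := (hC4sub hy).1
          have hyC3 : y ∉ C3 := fun h =>
            (Set.eq_empty_iff_forall_notMem.mp hem y) ⟨hy, h⟩
          rcases hy' with hyC2 | hyC1
          · by_cases hyC1 : y ∈ C1
            · exact hyC1
            · exact absurd (h21 ⟨hyC2, hyC1⟩) hyC3
          · exact hyC1
        · intro hsup
          exact hfC4 (hsup hf1)
      exact absurd (h1.2.2 C4 hC4C1) hC4.2.1
    · have hsub43 : C4 ∪ C3 ⊆ (C1 ∪ C2) \ {f} := by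
        refine union_subset ?_ hC3sub
        intro y hy
        exact ⟨(union_comm C2 C1) ▸ (hC4sub hy).1, (hC4sub hy).2⟩
      have hlt43 : (C4 ∪ C3).ncard < (C1 ∪ C2).ncard := by
        calc (C4 ∪ C3).ncard ≤ ((C1 ∪ C2) \ {f}).ncard :=
              Set.ncard_le_ncard hsub43 (hufin.subset diff_subset)
          _ < (C1 ∪ C2).ncard :=
              Set.ncard_diff_singleton_lt_of_mem (Or.inl hf1) hufin
      exact IH (C4 ∪ C3).ncard (lt_of_lt_of_le hlt43 hcard) C4 C3 a b le_rfl hC4 hC3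
        hne43 haC4 hbC3

/-- Transitivity of the "common circuit" relation. -/
lemma conn_trans {M : Matroid α} (hfin : M.E.Finite) {a x b : α}
    (h1 : a = x ∨ ∃ C, MCircuit M C ∧ a ∈ C ∧ x ∈ C)
    (h2 : x = b ∨ ∃ C, MCircuit M C ∧ x ∈ C ∧ b ∈ C) :
    a = b ∨ ∃ C, MCircuit M C ∧ a ∈ C ∧ b ∈ C := by
  rcases h1 with rfl | ⟨C1, hC1, haC1, hxC1⟩
  · exact h2
  rcases h2 with rfl | ⟨C2, hC2, hxC2, hbC2⟩
  · exact Or.inr ⟨C1, hC1, haC1, hxC1⟩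
  exact Or.inr (conn_key hfin (C1 ∪ C2).ncard C1 C2 a b le_rfl hC1 hC2
    ⟨x, hxC1, hxC2⟩ haC1 hbC2)

/-- Circuits of a restriction. -/
lemma mcircuit_restrict_iff {M : Matroid α} {R : Set α} (hR : R ⊆ M.E) {C : Set α} :
    MCircuit (M.restrict R) C ↔ MCircuit M C ∧ C ⊆ R := by
  constructor
  · rintro ⟨hCR, hdep, hmin⟩
    have hCR' : C ⊆ R := hCR
    refine ⟨⟨hCR'.trans hR, fun h => hdep (Matroid.restrict_indep_iff.mpr ⟨h, hCR'⟩),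
      fun D hD => (Matroid.restrict_indep_iff.mp (hmin D hD)).1⟩, hCR'⟩
  · rintro ⟨⟨hCE, hdep, hmin⟩, hCR⟩
    exact ⟨hCR, fun h => hdep (Matroid.restrict_indep_iff.mp h).1,
      fun D hD => Matroid.restrict_indep_iff.mpr ⟨hmin D hD, hD.subset.trans hCR⟩⟩

/-- Any two members of a nested set of a loopless matroid on a finite nonempty
ground set are nested or disjoint. -/
theorem stmt5 (M : Matroid α) (hfin : M.E.Finite) (hne : M.E.Nonempty)
    (hloop : ∀ e ∈ M.E, M.Indep {e}) (S : Set (Set α)) (hS : NestedSet M S) :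
    ∀ F ∈ S, ∀ G ∈ S, F ⊆ G ∨ G ⊆ F ∨ F ∩ G = ∅ := by
  classical
  intro F hF G hG
  by_contra hcon
  push_neg at hcon
  obtain ⟨hFG, hGF, hFGne⟩ := hcon
  obtain ⟨p, hpF, hpG⟩ := hFGne
  have hFne : F ≠ G := fun h => hFG (h ▸ subset_rfl)
  have hFflat := (hS.1 F hF).2.1
  have hGflat := (hS.1 G hG).2.1
  have hFE : F ⊆ M.E := hFflat.subset_ground
  have hGE : G ⊆ M.E := hGflat.subset_ground
  have hFGE : F ∪ G ⊆ M.E := union_subset hFE hGE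
  set N : Set α := M.closure (F ∪ G) with hN
  have hNE : N ⊆ M.E := M.closure_subset_ground _
  have hNfin : N.Finite := hfin.subset hNE
  have hFGN : F ∪ G ⊆ N := M.subset_closure _ hFGE
  have hMfin' : (M.restrict N).E.Finite := by
    rwa [Matroid.restrict_ground_eq]
  -- transfer a circuit of M contained in N to the restriction
  have toN : ∀ C : Set α, MCircuit M C → C ⊆ N → MCircuit (M.restrict N) C :=
    fun C hC hCN => (mcircuit_restrict_iff hNE).mpr ⟨hC, hCN⟩
  -- connectivity inside F and G
  have circF : ∀ a ∈ F, a ≠ p → ∃ C, MCircuit (M.restrict N) C ∧ a ∈ C ∧ p ∈ C := by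
    intro a haF hap
    obtain ⟨-, hconn⟩ := (hS.1 F hF).2.2
    obtain ⟨C, hC, haC, hpC⟩ := hconn a haF p hpF hap
    obtain ⟨hC', hCF⟩ := (mcircuit_restrict_iff hFE).mp hC
    exact ⟨C, toN C hC' (hCF.trans ((subset_union_left).trans hFGN)), haC, hpC⟩
  have circG : ∀ a ∈ G, a ≠ p → ∃ C, MCircuit (M.restrict N) C ∧ a ∈ C ∧ p ∈ C := by
    intro a haG hap
    obtain ⟨-, hconn⟩ := (hS.1 G hG).2.2
    obtain ⟨C, hC, haC, hpC⟩ := hconn a haG p hpG hap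
    obtain ⟨hC', hCG⟩ := (mcircuit_restrict_iff hGE).mp hC
    exact ⟨C, toN C hC' (hCG.trans ((subset_union_right).trans hFGN)), haC, hpC⟩
  -- every element of N is connected to p in the restriction
  have connp : ∀ y ∈ N, y = p ∨ ∃ C, MCircuit (M.restrict N) C ∧ y ∈ C ∧ p ∈ C := by
    intro y hy
    by_cases hyF : y ∈ F
    · by_cases hyp : y = p
      · exact Or.inl hyp
      · exact Or.inr (circF y hyF hyp)
    by_cases hyG : y ∈ G
    · by_cases hyp : y = p
      · exact Or.inl hyp
      · exact Or.inr (circG y hyG hyp)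
    -- y ∈ N \ (F ∪ G): use a fundamental circuit w.r.t. a basis of F ∪ G
    obtain ⟨I, hI⟩ := M.exists_isBasis (F ∪ G) hFGE
    have hyI : y ∈ M.closure I := by rw [hI.closure_eq_closure]; exact hy
    have hynI : y ∉ I := fun h => (hI.subset h).elim hyF hyG
    obtain ⟨C, hC, hyC, hCsub⟩ :=
      exists_fund_circuit ((hfin.subset (hFGE)).subset hI.subset) hI.indep hyI hynI
    have hCN : C ⊆ N := by
      intro z hz
      rcases hCsub hz with rfl | hzI
      · exact hy
      · exact hFGN (hI.subset hzI)
    -- find an element of C other than y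
    have : ∃ x ∈ C, x ≠ y := by
      by_contra hh
      push_neg at hh
      have hCy : C ⊆ {y} := fun z hz => hh z hz
      exact hC.2.1 ((hloop y (hNE hy)).subset hCy)
    obtain ⟨x, hxC, hxy⟩ := this
    have hxI : x ∈ I := (hCsub hxC).resolve_left hxy
    have hxFG : x ∈ F ∪ G := hI.subset hxI
    have hyx : y = x ∨ ∃ C', MCircuit (M.restrict N) C' ∧ y ∈ C' ∧ x ∈ C' :=
      Or.inr ⟨C, toN C hC hCN, hyC, hxC⟩
    have hxp : x = p ∨ ∃ C', MCircuit (M.restrict N) C' ∧ x ∈ C' ∧ p ∈ C' := by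
      by_cases hxp' : x = p
      · exact Or.inl hxp'
      · rcases hxFG with hxF | hxG
        · exact Or.inr (circF x hxF hxp')
        · exact Or.inr (circG x hxG hxp')
    have := conn_trans hMfin' hyx hxp
    rcases this with h | h
    · exact Or.inl h
    · exact Or.inr h
  -- the restriction to N is connected
  have hconnN : MConnected (M.restrict N) := by
    constructor
    · exact ⟨p, hFGN (Or.inl hpF)⟩
    · intro a ha b hb hab
      have ha' : a ∈ N := ha
      have hb' : b ∈ N := hb
      have h1 := connp a ha'
      have h2 := connp b hb'
      have h2' : p = b ∨ ∃ C, MCircuit (M.restrict N) C ∧ p ∈ C ∧ b ∈ C := by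
        rcases h2 with h | ⟨C, hC, hbC, hpC⟩
        · exact Or.inl h.symm
        · exact Or.inr ⟨C, hC, hpC, hbC⟩
      rcases conn_trans hMfin' h1 h2' with h | h
      · exact absurd h hab
      · exact h
  -- contradiction with the nested set property applied to {F, G}
  set T : Finset (Set α) := {F, G} with hT
  have hTS : ↑T ⊆ S := by
    intro X hX
    simp only [hT, Finset.coe_insert, Finset.coe_singleton, Set.mem_insert_iff,
      Set.mem_singleton_iff] at hX
    rcases hX with rfl | rfl
    · exact hF
    · exact hG
  have hTcard : 2 ≤ T.card := by
    rw [hT, Finset.card_insert_of_notMem (by simpa using hFne), Finset.card_singleton]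
  have hTinc : ∀ F' ∈ T, ∀ G' ∈ T, F' ≠ G' → ¬ F' ⊆ G' ∧ ¬ G' ⊆ F' := by
    intro F' hF' G' hG' hne'
    simp only [hT, Finset.mem_insert, Finset.mem_singleton] at hF' hG'
    rcases hF' with rfl | rfl <;> rcases hG' with rfl | rfl
    · exact absurd rfl hne'
    · exact ⟨hFG, hGF⟩
    · exact ⟨hGF, hFG⟩
    · exact absurd rfl hne'
  have hunion : (⋃ X ∈ T, X) = F ∪ G := by
    simp [hT]
  have := hS.2.2 T hTS hTcard hTinc
  rw [hunion] at this
  exact this hconnN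
end

section
/- Let M be a loopless matroid on a finite nonempty ground set E, let S be a nested set of M, and let α : S → ℝ be compatible with S. Then w^{S,α} is an M-ultrametric. -/
variable {α : Type*}

/-- `a : S → ℝ` is compatible with `S`: weakly monotone with respect to inclusion. -/
def Compat (S : Set (Set α)) (a : Set α → ℝ) : Prop :=
  ∀ F ∈ S, ∀ G ∈ S, F ⊆ G → a F ≤ a G

/-- `a : S → ℝ` is strictly compatible with `S`. -/
def StrictCompat (S : Set (Set α)) (a : Set α → ℝ) : Prop :=
  ∀ F ∈ S, ∀ G ∈ S, F ⊂ G → a F < a G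

/-- `F` is the minimal member of `S` containing `e`. -/
def MinMem (S : Set (Set α)) (e : α) (F : Set α) : Prop :=
  F ∈ S ∧ e ∈ F ∧ ∀ G ∈ S, e ∈ G → F ⊆ G

/-- `w` is the vector `w^{S,a}`, i.e. `w e = a (F_e)` where `F_e` is the minimal
member of `S` containing `e`, for every `e` in the ground set. -/
def Represents (M : Matroid α) (S : Set (Set α)) (a : Set α → ℝ) (w : α → ℝ) : Prop :=
  ∀ e ∈ M.E, ∃ F, MinMem S e F ∧ w e = a F

/-- The weight of a set `B` with respect to `w`. -/
noncomputable def bweight (w : α → ℝ) (B : Set α) : ℝ := ∑ᶠ e ∈ B, w e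

/-- `B` is a `w`-minimum basis of `M`. -/
def MinBase (M : Matroid α) (w : α → ℝ) (B : Set α) : Prop :=
  M.IsBase B ∧ ∀ B', M.IsBase B' → bweight w B ≤ bweight w B'

/-- `w` is an `M`-ultrametric: every ground element lies in some `w`-minimum basis. -/
def MUltrametric (M : Matroid α) (w : α → ℝ) : Prop :=
  ∀ e ∈ M.E, ∃ B, MinBase M w B ∧ e ∈ B



open Set

lemma MCircuit.subset_ground {M : Matroid α} {C : Set α} (h : MCircuit M C) : C ⊆ M.E := h.1

lemma MCircuit.dep {M : Matroid α} {C : Set α} (h : MCircuit M C) : ¬ M.Indep C := h.2.1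

lemma MCircuit.nonempty {M : Matroid α} {C : Set α} (h : MCircuit M C) : C.Nonempty := by
  rcases C.eq_empty_or_nonempty with rfl | hne
  · exact absurd M.empty_indep h.dep
  · exact hne

lemma MCircuit.diff_singleton_indep {M : Matroid α} {C : Set α} (h : MCircuit M C) {e : α}
    (he : e ∈ C) : M.Indep (C \ {e}) :=
  h.2.2 _ (sdiff_singleton_ssubset.mpr he)

lemma MCircuit.mem_closure_diff {M : Matroid α} {C : Set α} (h : MCircuit M C) {e : α}
    (he : e ∈ C) : e ∈ M.closure (C \ {e}) := by
  rw [(h.diff_singleton_indep he).mem_closure_iff]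
  left
  rw [insert_diff_singleton, insert_eq_of_mem he]
  exact ⟨h.dep, h.subset_ground⟩

lemma exists_circuit_subset_of_dep (M : Matroid α) {X : Set α} (hfin : X.Finite)
    (hXE : X ⊆ M.E) (hX : ¬ M.Indep X) : ∃ C, C ⊆ X ∧ MCircuit M C := by
  generalize hn : X.ncard = n
  induction n using Nat.strong_induction_on generalizing X with
  | _ n ih =>
    by_cases hall : ∀ D : Set α, D ⊂ X → M.Indep D
    · exact ⟨X, Subset.rfl, hXE, hX, hall⟩
    · push_neg at hall
      obtain ⟨D, hDX, hD⟩ := hall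
      obtain ⟨C, hCD, hC⟩ := ih D.ncard (hn ▸ Set.ncard_lt_ncard hDX hfin)
        (hfin.subset hDX.subset) (hDX.subset.trans hXE) hD rfl
      exact ⟨C, hCD.trans hDX.subset, hC⟩

lemma exists_circuit_of_mem_closure (M : Matroid α) {X : Set α} (hfin : M.E.Finite)
    (hXE : X ⊆ M.E) {e : α} (he : e ∈ M.closure X) (heX : e ∉ X) :
    ∃ C, MCircuit M C ∧ e ∈ C ∧ C ⊆ insert e X := by
  obtain ⟨I, hI⟩ := M.exists_isBasis X hXE
  have heI : e ∈ M.closure I := by rwa [hI.closure_eq_closure]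
  have heI' : e ∉ I := fun h => heX (hI.subset h)
  have hdep : ¬ M.Indep (insert e I) := by
    rw [hI.indep.mem_closure_iff] at heI
    rcases heI with h | h
    · exact h.not_indep
    · exact absurd h heI'
  obtain ⟨C, hCsub, hC⟩ := exists_circuit_subset_of_dep M
    (hfin.subset (insert_subset (M.closure_subset_ground X he) (hI.indep.subset_ground)))
    (insert_subset (M.closure_subset_ground X he) hI.indep.subset_ground) hdep
  have heC : e ∈ C := by
    by_contra h
    exact hC.dep (hI.indep.subset (fun x hx => ((hCsub hx).resolve_left (by rintro rfl; exact h hx))))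
  exact ⟨C, hC, heC, hCsub.trans (insert_subset_insert (hI.subset))⟩

lemma strong_elim_s6 (M : Matroid α) (hfin : M.E.Finite) {C₁ C₂ : Set α} (h₁ : MCircuit M C₁)
    (h₂ : MCircuit M C₂) {e f : α} (hf₁ : f ∈ C₁) (hf₂ : f ∈ C₂) (he₁ : e ∈ C₁) (he₂ : e ∉ C₂) :
    ∃ C, MCircuit M C ∧ e ∈ C ∧ C ⊆ (C₁ ∪ C₂) \ {f} := by
  have hef : e ≠ f := fun h => he₂ (h ▸ hf₂)
  set X : Set α := (C₁ ∪ C₂) \ {e, f} with hX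
  have hXE : X ⊆ M.E := diff_subset.trans (union_subset h₁.subset_ground h₂.subset_ground)
  have hfX : f ∈ M.closure X := by
    refine M.closure_subset_closure ?_ (h₂.mem_closure_diff hf₂)
    intro x hx
    exact ⟨Or.inr hx.1, by rintro (rfl | rfl); exacts [he₂ hx.1, hx.2 rfl]⟩
  have heX : e ∈ M.closure X := by
    have h1 : e ∈ M.closure (insert f X) := by
      refine M.closure_subset_closure ?_ (h₁.mem_closure_diff he₁)
      intro x hx
      rcases eq_or_ne x f with rfl | hxf
      · exact mem_insert _ _
      · exact mem_insert_of_mem _ ⟨Or.inl hx.1, by rintro (rfl | rfl); exacts [hx.2 rfl, hxf rfl]⟩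
    rwa [M.closure_insert_eq_of_mem_closure hfX] at h1
  have heX' : e ∉ X := fun h => h.2 (Or.inl rfl)
  obtain ⟨C, hC, heC, hCsub⟩ := exists_circuit_of_mem_closure M hfin hXE heX heX'
  refine ⟨C, hC, heC, hCsub.trans ?_⟩
  intro x hx
  rcases hx with rfl | hx
  · exact ⟨Or.inl he₁, fun h => hef h⟩
  · exact ⟨hx.1, fun h => hx.2 (Or.inr h)⟩

lemma circuit_trans (M : Matroid α) (hfin : M.E.Finite) {C₁ C₂ : Set α} (h₁ : MCircuit M C₁)
    (h₂ : MCircuit M C₂) {x y z : α} (hx : x ∈ C₁) (hy₁ : y ∈ C₁) (hy₂ : y ∈ C₂) (hz : z ∈ C₂)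
    (hxz : x ≠ z) : ∃ C, MCircuit M C ∧ x ∈ C ∧ z ∈ C ∧ C ⊆ C₁ ∪ C₂ := by
  by_contra hcon
  push_neg at hcon
  -- the set of sizes of unions of intersecting circuit pairs within C₁ ∪ C₂
  set P : Set ℕ := {n | ∃ D₁ D₂ : Set α, MCircuit M D₁ ∧ MCircuit M D₂ ∧ x ∈ D₁ ∧ z ∈ D₂ ∧
    (D₁ ∩ D₂).Nonempty ∧ D₁ ∪ D₂ ⊆ C₁ ∪ C₂ ∧ n = (D₁ ∪ D₂).ncard} with hP
  have hPne : P.Nonempty := ⟨(C₁ ∪ C₂).ncard, C₁, C₂, h₁, h₂, hx, hz, ⟨y, hy₁, hy₂⟩,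
    Subset.rfl, rfl⟩
  obtain ⟨D₁, D₂, hD₁, hD₂, hxD, hzD, ⟨f, hf₁, hf₂⟩, hDsub, hcard⟩ := Nat.sInf_mem hPne
  have hfinU : (C₁ ∪ C₂).Finite := hfin.subset (union_subset h₁.subset_ground h₂.subset_ground)
  have hltP : ∀ E₁ E₂ : Set α, MCircuit M E₁ → MCircuit M E₂ → x ∈ E₁ → z ∈ E₂ →
      (E₁ ∩ E₂).Nonempty → E₁ ∪ E₂ ⊆ C₁ ∪ C₂ → (E₁ ∪ E₂).ncard < (D₁ ∪ D₂).ncard → False := by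
    intro E₁ E₂ hE₁ hE₂ hxE hzE hint hsub hlt
    have : (E₁ ∪ E₂).ncard ∈ P := ⟨E₁, E₂, hE₁, hE₂, hxE, hzE, hint, hsub, rfl⟩
    exact absurd (Nat.sInf_le this) (by omega)
  -- x ∉ D₂ and z ∉ D₁, else done
  have hxD₂ : x ∉ D₂ := fun h => hcon _ hD₂ h hzD ((subset_union_right).trans hDsub)
  have hzD₁ : z ∉ D₁ := fun h => hcon _ hD₁ hxD h ((subset_union_left).trans hDsub)
  -- strong elimination: C₃ ∋ x, avoiding f
  obtain ⟨C₃, hC₃, hxC₃, hC₃sub⟩ := strong_elim_s6 M hfin hD₁ hD₂ hf₁ hf₂ hxD hxD₂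
  have hC₃sub' : C₃ ⊆ D₁ ∪ D₂ := hC₃sub.trans diff_subset
  have hzC₃ : z ∉ C₃ := fun h => hcon _ hC₃ hxC₃ h (hC₃sub'.trans hDsub)
  -- C₃ must meet D₂ \ D₁
  have hmeet : (C₃ ∩ (D₂ \ D₁)).Nonempty := by
    by_contra h
    rw [not_nonempty_iff_eq_empty] at h
    have hsub : C₃ ⊆ D₁ := by
      intro u hu
      rcases hC₃sub' hu with h1 | h2
      · exact h1
      · by_contra h3
        exact absurd (by exact ⟨u, hu, h2, h3⟩ : (C₃ ∩ (D₂ \ D₁)).Nonempty)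
          (by rw [h]; exact not_nonempty_empty)
    have : C₃ ⊂ D₁ := hsub.ssubset_of_ne (fun h => (hC₃sub (h ▸ hf₁)).2 rfl)
    exact hC₃.dep (hD₁.2.2 _ this)
  obtain ⟨g, hgC₃, hgD₂, hgD₁⟩ : ∃ g, g ∈ C₃ ∧ g ∈ D₂ ∧ g ∉ D₁ := by
    obtain ⟨g, h1, h2, h3⟩ := hmeet; exact ⟨g, h1, h2, h3⟩
  -- second strong elimination: C₄ ∋ z, within D₂ ∪ C₃, avoiding g
  obtain ⟨C₄, hC₄, hzC₄, hC₄sub⟩ := strong_elim_s6 M hfin hD₂ hC₃ hgD₂ hgC₃ hzD hzC₃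
  have hC₄sub' : C₄ ⊆ D₁ ∪ D₂ := hC₄sub.trans (diff_subset.trans
    (union_subset subset_union_right hC₃sub'))
  have hxC₄ : x ∉ C₄ := fun h => hcon _ hC₄ h hzC₄ (hC₄sub'.trans hDsub)
  have hgC₄ : g ∉ C₄ := fun h => (hC₄sub h).2 rfl
  have hfC₃ : f ∉ C₃ := fun h => (hC₃sub h).2 rfl
  by_cases hmeet1 : (D₁ ∩ C₄).Nonempty
  · -- pair (D₁, C₄): union avoids g ∈ D₂ \ D₁, strictly smaller
    refine hltP D₁ C₄ hD₁ hC₄ hxD hzC₄ hmeet1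
      ((union_subset subset_union_left hC₄sub').trans hDsub) ?_
    refine Set.ncard_lt_ncard ?_ (hfinU.subset hDsub)
    constructor
    · exact union_subset subset_union_left hC₄sub'
    · intro hsub
      exact hgC₄ ((hsub (Or.inr hgD₂)).resolve_left hgD₁)
  · -- then f ∉ C₄; pair (C₃, C₄): union avoids f, strictly smaller
    have hfC₄ : f ∉ C₄ := fun h => hmeet1 ⟨f, hf₁, h⟩
    have hmeet2 : (C₃ ∩ C₄).Nonempty := by
      by_contra h
      rw [not_nonempty_iff_eq_empty] at h
      have hsub : C₄ ⊆ D₂ := by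
        intro u hu
        rcases (hC₄sub hu).1 with h1 | h2
        · exact h1
        · exact absurd (⟨h2, hu⟩ : u ∈ C₃ ∩ C₄) (eq_empty_iff_forall_notMem.mp h u)
      have : C₄ ⊂ D₂ := hsub.ssubset_of_ne (fun h => hgC₄ (h ▸ hgD₂))
      exact hC₄.dep (hD₂.2.2 _ this)
    refine hltP C₃ C₄ hC₃ hC₄ hxC₃ hzC₄ hmeet2
      ((union_subset hC₃sub' hC₄sub').trans hDsub) ?_
    refine Set.ncard_lt_ncard ?_ (hfinU.subset hDsub)
    constructor
    · exact union_subset hC₃sub' hC₄sub'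
    · intro hsub
      rcases hsub (Or.inl hf₁) with h | h
      exacts [hfC₃ h, hfC₄ h]

lemma restrict_circuit_iff {M : Matroid α} {V C : Set α} (hV : V ⊆ M.E) :
    MCircuit (M.restrict V) C ↔ MCircuit M C ∧ C ⊆ V := by
  constructor
  · rintro ⟨hCV, hdep, hmin⟩
    rw [Matroid.restrict_ground_eq] at hCV
    refine ⟨⟨hCV.trans hV, ?_, ?_⟩, hCV⟩
    · intro h; exact hdep (Matroid.restrict_indep_iff.mpr ⟨h, hCV⟩)
    · intro D hD; exact (Matroid.restrict_indep_iff.mp (hmin D hD)).1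
  · rintro ⟨⟨hCE, hdep, hmin⟩, hCV⟩
    refine ⟨by rwa [Matroid.restrict_ground_eq], ?_, ?_⟩
    · intro h; exact hdep (Matroid.restrict_indep_iff.mp h).1
    · intro D hD
      exact Matroid.restrict_indep_iff.mpr ⟨hmin D hD, hD.subset.trans hCV⟩

def RelV (M : Matroid α) (V : Set α) (x y : α) : Prop :=
  x = y ∨ ∃ D, MCircuit M D ∧ D ⊆ V ∧ x ∈ D ∧ y ∈ D

lemma RelV.symm {M : Matroid α} {V : Set α} {x y : α} (h : RelV M V x y) : RelV M V y x := by
  rcases h with rfl | ⟨D, h1, h2, h3, h4⟩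
  · exact Or.inl rfl
  · exact Or.inr ⟨D, h1, h2, h4, h3⟩

lemma RelV.trans {M : Matroid α} (hfin : M.E.Finite) {V : Set α} {x y z : α}
    (hxy : RelV M V x y) (hyz : RelV M V y z) : RelV M V x z := by
  rcases hxy with rfl | ⟨D₁, hD₁, hD₁V, hxD, hyD⟩
  · exact hyz
  rcases hyz with rfl | ⟨D₂, hD₂, hD₂V, hyD₂, hzD₂⟩
  · exact Or.inr ⟨D₁, hD₁, hD₁V, hxD, hyD⟩
  rcases eq_or_ne x z with rfl | hxz
  · exact Or.inl rfl
  obtain ⟨C, hC, hxC, hzC, hCsub⟩ := circuit_trans M hfin hD₁ hD₂ hxD hyD hyD₂ hzD₂ hxz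
  exact Or.inr ⟨C, hC, hCsub.trans (union_subset hD₁V hD₂V), hxC, hzC⟩

lemma glue (M : Matroid α) (hfin : M.E.Finite) (hloop : ∀ x ∈ M.E, M.Indep {x})
    {U : Set α} (hU : U ⊆ M.E) {h : α} (hh : h ∈ M.closure U)
    (hhub : ∀ x ∈ U, RelV M (M.closure U) x h) :
    MConnected (M.restrict (M.closure U)) := by
  set V := M.closure U with hV
  have hVE : V ⊆ M.E := M.closure_subset_ground U
  have hUV : U ⊆ V := M.subset_closure U hU
  have hub : ∀ x ∈ V, RelV M V x h := by
    intro x hx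
    by_cases hxU : x ∈ U
    · exact hhub x hxU
    · obtain ⟨D, hD, hxD, hDsub⟩ := exists_circuit_of_mem_closure M hfin hU hx hxU
      have hDV : D ⊆ V := hDsub.trans (insert_subset hx hUV)
      obtain ⟨y, hyD, hyx⟩ : ∃ y, y ∈ D ∧ y ≠ x := by
        by_contra hcon
        push_neg at hcon
        have : D ⊆ {x} := fun u hu => hcon u hu
        rcases subset_singleton_iff_eq.mp this with rfl | rfl
        · exact hD.dep M.empty_indep
        · exact hD.dep (hloop x (hVE hx))
      have hyU : y ∈ U := (hDsub hyD).resolve_left hyx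
      exact RelV.trans hfin (Or.inr ⟨D, hD, hDV, hxD, hyD⟩) (hhub y hyU)
  refine ⟨⟨h, hh⟩, ?_⟩
  intro a ha b hb hab
  rw [Matroid.restrict_ground_eq] at ha hb
  have hR : RelV M V a b := RelV.trans hfin (hub a ha) (RelV.symm (hub b hb))
  rcases hR with rfl | ⟨C, hC, hCV, haC, hbC⟩
  · exact absurd rfl hab
  · exact ⟨C, (restrict_circuit_iff hVE).mpr ⟨hC, hCV⟩, haC, hbC⟩

lemma connected_flat_rel {M : Matroid α} {F : Set α} (hFE : F ⊆ M.E)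
    (hconn : MConnected (M.restrict F)) {V : Set α} (hFV : F ⊆ V) {x y : α}
    (hx : x ∈ F) (hy : y ∈ F) : RelV M V x y := by
  rcases eq_or_ne x y with rfl | hxy
  · exact Or.inl rfl
  obtain ⟨C, hC, hxC, hyC⟩ := hconn.2 x (by rwa [Matroid.restrict_ground_eq]) y
    (by rwa [Matroid.restrict_ground_eq]) hxy
  obtain ⟨hC', hCF⟩ := (restrict_circuit_iff hFE).mp hC
  exact Or.inr ⟨C, hC', hCF.trans hFV, hxC, hyC⟩

lemma laminar {M : Matroid α} (hfin : M.E.Finite) (hloop : ∀ x ∈ M.E, M.Indep {x})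
    {S : Set (Set α)} (hS : NestedSet M S) {F G : Set α} (hF : F ∈ S) (hG : G ∈ S)
    {x : α} (hxF : x ∈ F) (hxG : x ∈ G) : F ⊆ G ∨ G ⊆ F := by
  classical
  by_contra hcon
  push_neg at hcon
  obtain ⟨hFG, hGF⟩ := hcon
  have hne : F ≠ G := fun h => hFG (h ▸ Subset.rfl)
  set T : Finset (Set α) := {F, G} with hT
  have hTS : ↑T ⊆ S := by
    intro H hH
    rcases Finset.mem_insert.mp hH with rfl | hH
    · exact hF
    · exact Finset.mem_singleton.mp hH ▸ hG
  have hcard : 2 ≤ T.card := le_of_eq (Finset.card_pair hne).symm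
  have hinc : ∀ A ∈ T, ∀ B ∈ T, A ≠ B → ¬ A ⊆ B ∧ ¬ B ⊆ A := by
    intro A hA B hB hAB
    rcases Finset.mem_insert.mp hA with rfl | hA
    · rcases Finset.mem_insert.mp hB with rfl | hB
      · exact absurd rfl hAB
      · rw [Finset.mem_singleton.mp hB]; exact ⟨hFG, hGF⟩
    · rw [Finset.mem_singleton.mp hA]
      rcases Finset.mem_insert.mp hB with rfl | hB
      · exact ⟨hGF, hFG⟩
      · exact absurd ((Finset.mem_singleton.mp hA).trans (Finset.mem_singleton.mp hB).symm) hAB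
  have hdisconn := hS.2.2 T hTS hcard hinc
  have hUnion : (⋃ H ∈ T, H) = F ∪ G := by
    simp [hT]
  rw [hUnion] at hdisconn
  have hFE : F ⊆ M.E := (hS.1 F hF).2.1.subset_ground
  have hGE : G ⊆ M.E := (hS.1 G hG).2.1.subset_ground
  have hUE : F ∪ G ⊆ M.E := union_subset hFE hGE
  refine hdisconn (glue M hfin hloop hUE
    (M.subset_closure _ hUE (Or.inl hxF)) ?_)
  intro y hy
  rcases hy with hyF | hyG
  · exact connected_flat_rel hFE (hS.1 F hF).2.2
      ((subset_union_left).trans (M.subset_closure _ hUE)) hyF hxF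
  · exact connected_flat_rel hGE (hS.1 G hG).2.2
      ((subset_union_right).trans (M.subset_closure _ hUE)) hyG hxG

lemma exists_minMem {M : Matroid α} (hfin : M.E.Finite) (hloop : ∀ x ∈ M.E, M.Indep {x})
    {S : Set (Set α)} (hS : NestedSet M S) {e : α} (he : e ∈ M.E) :
    ∃ F, MinMem S e F := by
  set 𝒞 : Set (Set α) := {F ∈ S | e ∈ F} with h𝒞
  have hne : 𝒞.Nonempty := ⟨MComponent M e, hS.2.1 e he, he, Or.inl rfl⟩
  have hfin𝒞 : 𝒞.Finite := by
    refine (hfin.finite_subsets).subset ?_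
    intro F hF
    exact (hS.1 F hF.1).2.1.subset_ground
  obtain ⟨F, hF𝒞, hmin⟩ := Set.Finite.exists_minimalFor Set.ncard 𝒞 hfin𝒞 hne
  refine ⟨F, hF𝒞.1, hF𝒞.2, ?_⟩
  intro G hG heG
  rcases laminar hfin hloop hS hF𝒞.1 hG hF𝒞.2 heG with h | h
  · exact h
  · rcases eq_or_ne G F with rfl | hne'
    · exact Subset.rfl
    · have hGF : G ⊂ F := h.ssubset_of_ne hne'
      have : G.ncard < F.ncard := Set.ncard_lt_ncard hGF
        (hfin.subset (hS.1 F hF𝒞.1).2.1.subset_ground)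
      exact absurd (hmin (j := G) ⟨hG, heG⟩ this.le) (by omega)

lemma key_lemma {M : Matroid α} (hfin : M.E.Finite) (hloop : ∀ x ∈ M.E, M.Indep {x})
    {S : Set (Set α)} (hS : NestedSet M S) {a : Set α → ℝ} (ha : Compat S a)
    {w : α → ℝ} (hw : Represents M S a w) {C : Set α} (hC : MCircuit M C) {e : α}
    (he : e ∈ C) : ∃ f ∈ C, f ≠ e ∧ w e ≤ w f := by
  classical
  by_contra hcon
  push_neg at hcon
  have hlt : ∀ f ∈ C, f ≠ e → w f < w e := fun f hf hfe => hcon f hf hfe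
  have heE : e ∈ M.E := hC.subset_ground he
  obtain ⟨Fe, hFe, hwe⟩ := hw e heE
  -- choice function for minimal members
  set g : α → Set α := fun f =>
    if hf : ∃ F, MinMem S f F ∧ w f = a F then hf.choose else ∅ with hg
  have hgspec : ∀ f ∈ M.E, MinMem S f (g f) ∧ w f = a (g f) := by
    intro f hf
    have h := hw f hf
    simp only [hg, dif_pos h]
    exact h.choose_spec
  set T₀ : Set (Set α) := g '' (C \ {e}) with hT₀
  have hT₀fin : T₀.Finite := ((hfin.subset hC.subset_ground).sdiff).image g
  have hT₀spec : ∀ F ∈ T₀, ∃ f ∈ C \ {e}, MinMem S f F ∧ w f = a F := by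
    rintro F ⟨f, hf, rfl⟩
    exact ⟨f, hf, hgspec f (hC.subset_ground hf.1)⟩
  have hT₀S : ∀ F ∈ T₀, F ∈ S := by
    intro F hF; obtain ⟨f, _, hm, _⟩ := hT₀spec F hF; exact hm.1
  have hT₀E : ∀ F ∈ T₀, F ⊆ M.E := fun F hF => (hS.1 F (hT₀S F hF)).2.1.subset_ground
  have heT₀ : ∀ F ∈ T₀, e ∉ F := by
    intro F hF heF
    obtain ⟨f, hf, hm, hwf⟩ := hT₀spec F hF
    have h1 : Fe ⊆ F := hFe.2.2 F hm.1 heF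
    have h2 : a Fe ≤ a F := ha Fe hFe.1 F hm.1 h1
    have h3 : w f < w e := hlt f hf.1 (by simpa using hf.2)
    rw [hwe, hwf] at h3
    exact absurd h2 (not_le.mpr h3)
  -- maximal members
  set T : Set (Set α) := {F ∈ T₀ | ∀ G ∈ T₀, F ⊆ G → F = G} with hT
  have hTfin : T.Finite := hT₀fin.subset (sep_subset _ _)
  have hcover : ∀ F ∈ T₀, ∃ G ∈ T, F ⊆ G := by
    intro F hF
    set 𝒟 : Set (Set α) := {G ∈ T₀ | F ⊆ G} with h𝒟
    obtain ⟨G, hG𝒟, hmax⟩ := Set.Finite.exists_maximalFor Set.ncard 𝒟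
      (hT₀fin.subset (sep_subset _ _)) ⟨F, hF, Subset.rfl⟩
    refine ⟨G, ⟨hG𝒟.1, ?_⟩, hG𝒟.2⟩
    intro H hH hGH
    have hH𝒟 : H ∈ 𝒟 := ⟨hH, hG𝒟.2.trans hGH⟩
    have hHfin : H.Finite := hfin.subset (hT₀E H hH)
    have := hmax (j := H) hH𝒟 (Set.ncard_le_ncard hGH hHfin)
    exact Set.eq_of_subset_of_ncard_le hGH this.ge hHfin
  set U : Set α := ⋃₀ T with hU
  have hUE : U ⊆ M.E := by
    intro x hx; obtain ⟨F, hF, hxF⟩ := hx; exact hT₀E F hF.1 hxF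
  have hCU : C \ {e} ⊆ U := by
    intro f hf
    have hgf : g f ∈ T₀ := ⟨f, hf, rfl⟩
    obtain ⟨G, hG, hsub⟩ := hcover _ hgf
    exact ⟨G, hG, hsub (hgspec f (hC.subset_ground hf.1)).1.2.1⟩
  have heclU : e ∈ M.closure U :=
    M.closure_subset_closure hCU (hC.mem_closure_diff he)
  have heU : e ∉ U := by
    rintro ⟨F, hF, heF⟩; exact heT₀ F hF.1 heF
  have hCclU : C ⊆ M.closure U := by
    intro x hx
    rcases eq_or_ne x e with rfl | hxe
    · exact heclU
    · exact (M.subset_closure U hUE) (hCU ⟨hx, hxe⟩)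
  -- T nonempty
  obtain ⟨f₀, hf₀C, hf₀e⟩ : ∃ f, f ∈ C ∧ f ≠ e := by
    by_contra hcon'
    push_neg at hcon'
    have : C = {e} := (subset_singleton_iff_eq.mp hcon').resolve_left
      (Set.nonempty_iff_ne_empty.mp hC.nonempty)
    exact hC.dep (this ▸ hloop e heE)
  obtain ⟨G₀, hG₀, _⟩ := hcover (g f₀) ⟨f₀, ⟨hf₀C, hf₀e⟩, rfl⟩
  -- hub connectivity
  have hhub : ∀ x ∈ U, RelV M (M.closure U) x e := by
    rintro x ⟨F, hFT, hxF⟩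
    obtain ⟨f, hf, hm, _⟩ := hT₀spec F hFT.1
    have hFS : F ∈ S := hm.1
    have hFU : F ⊆ U := fun y hy => ⟨F, hFT, hy⟩
    have hFclU : F ⊆ M.closure U := hFU.trans (M.subset_closure U hUE)
    have h1 : RelV M (M.closure U) x f := connected_flat_rel (hT₀E F hFT.1)
      (hS.1 F hFS).2.2 hFclU hxF hm.2.1
    have h2 : RelV M (M.closure U) f e := Or.inr ⟨C, hC, hCclU, hf.1, he⟩
    exact RelV.trans hfin h1 h2
  have hconn := glue M hfin hloop hUE heclU hhub
  -- case: T a singleton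
  by_cases hsing : ∀ G₁ ∈ T, ∀ G₂ ∈ T, G₁ = G₂
  · have hUG : U = G₀ := by
      apply subset_antisymm
      · rintro x ⟨F, hF, hxF⟩; rwa [hsing F hF G₀ hG₀] at hxF
      · intro x hx; exact ⟨G₀, hG₀, hx⟩
    have hflat : M.IsFlat G₀ := (hS.1 G₀ (hT₀S G₀ hG₀.1)).2.1
    rw [hUG, hflat.closure] at heclU
    exact heU (hUG ▸ heclU)
  · push_neg at hsing
    obtain ⟨G₁, hG₁, G₂, hG₂, hG₁₂⟩ := hsing
    set Tf : Finset (Set α) := hTfin.toFinset with hTf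
    have hTfS : ↑Tf ⊆ S := by
      intro F hF
      rw [Finset.mem_coe, hTf, Set.Finite.mem_toFinset] at hF
      exact hT₀S F hF.1
    have hcard : 2 ≤ Tf.card := by
      rw [show (2:ℕ) = 1 + 1 from rfl]
      exact Finset.one_lt_card.mpr ⟨G₁, (Set.Finite.mem_toFinset _).mpr hG₁, G₂,
        (Set.Finite.mem_toFinset _).mpr hG₂, hG₁₂⟩
    have hinc : ∀ A ∈ Tf, ∀ B ∈ Tf, A ≠ B → ¬ A ⊆ B ∧ ¬ B ⊆ A := by
      intro A hA B hB hAB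
      rw [hTf, Set.Finite.mem_toFinset] at hA hB
      exact ⟨fun h => hAB (hA.2 B hB.1 h), fun h => hAB.symm (hB.2 A hA.1 h)⟩
    have hbiU : (⋃ F ∈ Tf, F) = U := by
      ext x
      simp only [mem_iUnion, hU, mem_sUnion, hTf, Set.Finite.mem_toFinset]
      tauto
    have := hS.2.2 Tf hTfS hcard hinc
    rw [hbiU] at this
    exact this hconn

lemma bweight_toFinset (w : α → ℝ) {B : Set α} (hB : B.Finite) :
    bweight w B = ∑ x ∈ hB.toFinset, w x := by
  rw [bweight, ← finsum_mem_coe_finset, Set.Finite.coe_toFinset hB]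

lemma bweight_exchange (w : α → ℝ) {B : Set α} (hB : B.Finite) {e f : α}
    (he : e ∉ B) (hf : f ∈ B) :
    bweight w (insert e (B \ {f})) = bweight w B - w f + w e := by
  classical
  have h1 : (insert e (B \ {f})).Finite := ((hB.sdiff).insert e)
  rw [bweight_toFinset w h1, bweight_toFinset w hB]
  have h2 : h1.toFinset = insert e (hB.toFinset.erase f) := by
    ext x
    simp only [Set.Finite.mem_toFinset, Finset.mem_insert, Finset.mem_erase,
      Set.mem_insert_iff, Set.mem_diff, Set.mem_singleton_iff]
    tauto
  rw [h2, Finset.sum_insert (by simp [he])]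
  rw [Finset.sum_erase_eq_sub (by simpa using hf)]
  ring

lemma exists_minBase (M : Matroid α) (hfin : M.E.Finite) (w : α → ℝ) :
    ∃ B, MinBase M w B := by
  have hBfin : {B | M.IsBase B}.Finite :=
    hfin.finite_subsets.subset (fun B hB => hB.subset_ground)
  obtain ⟨B, hB, hmin⟩ := Set.exists_min_image _ (bweight w) hBfin M.exists_isBase
  exact ⟨B, hB, fun B' hB' => hmin B' hB'⟩

/-- If `S` is a nested set of a loopless matroid `M` on a finite nonempty ground set
and `a` is compatible with `S`, then the vector `w^{S,a}` exists and is an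
`M`-ultrametric. -/
theorem stmt6 (M : Matroid α) (hfin : M.E.Finite) (hne : M.E.Nonempty)
    (hloop : ∀ e ∈ M.E, M.Indep {e}) (S : Set (Set α)) (hS : NestedSet M S)
    (a : Set α → ℝ) (ha : Compat S a) :
    (∃ w : α → ℝ, Represents M S a w) ∧
      ∀ w : α → ℝ, Represents M S a w → MUltrametric M w := by
  classical
  constructor
  · refine ⟨fun e => if h : ∃ F, MinMem S e F then a h.choose else 0, ?_⟩
    intro e he
    have h : ∃ F, MinMem S e F := exists_minMem hfin hloop hS he
    exact ⟨h.choose, h.choose_spec, dif_pos h⟩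
  · intro w hw e he
    obtain ⟨B, hB⟩ := exists_minBase M hfin w
    by_cases heB : e ∈ B
    · exact ⟨B, hB, heB⟩
    have heclB : e ∈ M.closure B := by rw [hB.1.closure_eq]; exact he
    obtain ⟨C, hC, heC, hCsub⟩ := exists_circuit_of_mem_closure M hfin
      hB.1.subset_ground heclB heB
    obtain ⟨f, hfC, hfe, hwef⟩ := key_lemma hfin hloop hS ha hw hC heC
    have hfB : f ∈ B := (hCsub hfC).resolve_left hfe
    have hindep : M.Indep (insert e (B \ {f})) := by
      by_contra hdep
      obtain ⟨C', hC'sub, hC'⟩ := exists_circuit_subset_of_dep M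
        (((hfin.subset hB.1.subset_ground).sdiff).insert e)
        (insert_subset (M.closure_subset_ground B heclB)
          (diff_subset.trans hB.1.subset_ground)) hdep
      have heC' : e ∈ C' := by
        by_contra h
        exact hC'.dep (hB.1.indep.subset (fun x hx =>
          (((hC'sub hx).resolve_left (by rintro rfl; exact h hx)).1)))
      have hfC' : f ∉ C' := by
        intro h
        rcases hC'sub h with h1 | h2
        · exact hfe h1
        · exact h2.2 rfl
      obtain ⟨D, hD, hfD, hDsub⟩ := strong_elim_s6 M hfin hC hC' heC heC' hfC hfC'
      have hDB : D ⊆ B := by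
        intro x hx
        obtain ⟨hx1, hx2⟩ := hDsub hx
        have hxe : x ≠ e := fun h => hx2 (h ▸ rfl)
        rcases hx1 with h1 | h2
        · exact (hCsub h1).resolve_left hxe
        · exact diff_subset ((hC'sub h2).resolve_left hxe)
      exact hD.dep (hB.1.indep.subset hDB)
    have hB' : M.IsBase (insert e (B \ {f})) := hB.1.exchange_isBase_of_indep heB hindep
    have hw' : bweight w (insert e (B \ {f})) ≤ bweight w B := by
      rw [bweight_exchange w (hfin.subset hB.1.subset_ground) heB hfB]
      linarith
    exact ⟨insert e (B \ {f}), ⟨hB', fun B'' hB'' => hw'.trans (hB.2 B'' hB'')⟩,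
      mem_insert _ _⟩
end
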